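/- arXiv:1502.00338 — 7 statements merged into one kernel-verified Lean document; each statement's English description precedes it below -/
import Mathlib

section
/- Let a1, a2, a3, b1, b2 be real constants and let ρ0, Veff, Ne, fpe be positive reals. There exist k1, k2 ∈ ℝ with 1 − k1·b2 ≠ 0 such that a1 + k1·a2·b1/(1 − k1·b2) < 0 and |a3·b1·(k2 − fpe·ρ0·Veff·k1)/(ρ0·Veff·Ne·(1 − k1·b2))| < |a1 + k1·a2·b1/(1 − k1·b2)| if and only if either a1 < 0, or (a1 ≥ 0 and a2·b1 ≠ 0). -/
lemma aux_k1 (a1 c b2 : ℝ) (hc : c ≠ 0) :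
    ∃ k1 : ℝ, 1 - k1 * b2 ≠ 0 ∧ a1 + k1 * c / (1 - k1 * b2) < 0 := by
  obtain ⟨t, ht, hd⟩ : ∃ t : ℝ, t ≤ -(a1 + 1) ∧ c + t * b2 ≠ 0 := by
    by_cases h : c + (-(a1 + 1)) * b2 = 0
    · refine ⟨-(a1 + 2), by linarith, fun h2 => ?_⟩
      have hb2 : b2 = 0 := by nlinarith [h, h2]
      rw [hb2] at h; simp at h; exact hc h
    · exact ⟨-(a1 + 1), le_refl _, h⟩
  refine ⟨t / (c + t * b2), ?_, ?_⟩ <;>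
  · have h1 : 1 - t / (c + t * b2) * b2 = c / (c + t * b2) := by
      field_simp; ring
    rw [h1]
    · first
      | exact div_ne_zero hc hd
      | · have h2 : t / (c + t * b2) * c / (c / (c + t * b2)) = t := by
            field_simp
          rw [h2]; linarith

/-- existence of stabilizing gains `k1, k2` satisfying the two
stabilizability conditions is equivalent to `a1 < 0` or (`a1 ≥ 0` and `a2·b1 ≠ 0`). -/
theorem exists_stabilizing_gains_iff
    (a1 a2 a3 b1 b2 ρ0 Veff Ne fpe : ℝ)
    (hρ0 : 0 < ρ0) (hVeff : 0 < Veff) (hNe : 0 < Ne) (hfpe : 0 < fpe) :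
    (∃ k1 k2 : ℝ, 1 - k1 * b2 ≠ 0 ∧
        a1 + k1 * a2 * b1 / (1 - k1 * b2) < 0 ∧
        |a3 * b1 * (k2 - fpe * ρ0 * Veff * k1) / (ρ0 * Veff * Ne * (1 - k1 * b2))| <
          |a1 + k1 * a2 * b1 / (1 - k1 * b2)|) ↔
      (a1 < 0 ∨ (0 ≤ a1 ∧ a2 * b1 ≠ 0)) := by
  constructor
  · rintro ⟨k1, k2, h0, h1, h2⟩
    by_cases ha : a1 < 0
    · exact Or.inl ha
    · refine Or.inr ⟨le_of_not_gt ha, fun hab => ?_⟩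
      have : k1 * a2 * b1 = 0 := by rw [mul_assoc, hab, mul_zero]
      rw [this, zero_div, add_zero] at h1
      exact ha h1
  · rintro (ha | ⟨ha, hab⟩)
    · refine ⟨0, 0, by norm_num, by simpa using ha, ?_⟩
      simp only [mul_zero, sub_zero, mul_zero, zero_div, abs_zero]
      rw [abs_pos]
      intro h
      norm_num at h
      linarith
    · obtain ⟨k1, h0, h1⟩ := aux_k1 a1 (a2 * b1) b2 hab
      rw [← mul_assoc] at h1
      refine ⟨k1, fpe * ρ0 * Veff * k1, h0, h1, ?_⟩
      simp only [sub_self, mul_zero, zero_div, abs_zero]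
      rw [abs_pos]
      · linarith
end

section
/- Let θ0 < 0, α > 0 and θ1, a3 ∈ ℝ satisfy |a3·θ1| < −θ0. Then there exist constants A1 > 0 and γ1 > 0 such that the symmetric 2×2 real matrix with rows (2·θ0 + A1·α·θ1², a3) and (a3, −A1·e^{−γ1}·α) is negative definite; equivalently, 2·θ0 + A1·α·θ1² < 0 and (2·θ0 + A1·α·θ1²)·(−A1·e^{−γ1}·α) − a3² > 0. -/
lemma neg_def_2x2 (a b d : ℝ) (ha : a < 0) (hdet : a * d - b ^ 2 > 0) :
    ∀ x : Fin 2 → ℝ, x ≠ 0 →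
      dotProduct x ((!![a, b; b, d]).mulVec x) < 0 := by
  intro x hx
  have hx' : x 0 ≠ 0 ∨ x 1 ≠ 0 := by
    by_contra hc
    push_neg at hc
    apply hx
    funext i
    fin_cases i <;> simp [hc.1, hc.2]
  simp [Matrix.mulVec, dotProduct, Fin.sum_univ_two]
  rcases eq_or_ne (x 1) 0 with h1 | h1
  · rcases hx' with h0 | h0
    · simp only [h1, mul_zero, add_zero, zero_mul, zero_add]
      nlinarith [mul_neg_of_neg_of_pos ha (sq_pos_of_ne_zero h0)]
    · exact absurd h1 h0
  · nlinarith [sq_nonneg (a * x 0 + b * x 1), sq_pos_of_ne_zero h1,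
      mul_pos hdet (sq_pos_of_ne_zero h1)]

/-- if `θ0 < 0`, `α > 0` and `|a3·θ1| < −θ0`, then there exist `A1 > 0` and
`γ1 > 0` such that the symmetric matrix `!![2θ0 + A1·α·θ1², a3; a3, −A1·e^{−γ1}·α]` is
negative definite; equivalently its (1,1) entry is negative and its determinant is positive. -/
theorem exists_weights_matrix_negative_definite
    (θ0 θ1 a3 α : ℝ) (hθ0 : θ0 < 0) (hα : 0 < α) (h : |a3 * θ1| < -θ0) :
    ∃ A1 > (0:ℝ), ∃ γ1 > (0:ℝ),
      (∀ x : Fin 2 → ℝ, x ≠ 0 →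
        dotProduct x
          ((!![2 * θ0 + A1 * α * θ1 ^ 2, a3; a3, -A1 * Real.exp (-γ1) * α]).mulVec x) < 0) ∧
      2 * θ0 + A1 * α * θ1 ^ 2 < 0 ∧
      (2 * θ0 + A1 * α * θ1 ^ 2) * (-A1 * Real.exp (-γ1) * α) - a3 ^ 2 > 0 := by
  have hb : (0:ℝ) < -θ0 := by linarith
  have hsq : (a3 * θ1) ^ 2 < θ0 ^ 2 := by
    have := abs_nonneg (a3 * θ1)
    nlinarith [sq_abs (a3 * θ1)]
  by_cases hθ1 : θ1 = 0
  · subst hθ1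
    set A1 : ℝ := (a3 ^ 2 + 1) / (-θ0 * α) with hA1
    have hA1pos : 0 < A1 := div_pos (by positivity) (by positivity)
    have he : Real.exp (-Real.log 2) = 1 / 2 := by
      rw [Real.exp_neg, Real.exp_log (by norm_num)]; norm_num
    have hAα : A1 * α * (-θ0) = a3 ^ 2 + 1 := by
      rw [hA1, div_mul_eq_mul_div, div_mul_eq_mul_div,
        div_eq_iff (ne_of_gt (mul_pos hb hα))]; ring
    have hc : 2 * θ0 + A1 * α * (0:ℝ) ^ 2 < 0 := by nlinarith
    have hdet : (2 * θ0 + A1 * α * (0:ℝ) ^ 2) * (-A1 * Real.exp (-Real.log 2) * α)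
        - a3 ^ 2 > 0 := by
      rw [he]; nlinarith [hAα]
    exact ⟨A1, hA1pos, Real.log 2, Real.log_pos (by norm_num),
      neg_def_2x2 _ _ _ hc hdet, hc, hdet⟩
  · have hθ1sq : (0:ℝ) < θ1 ^ 2 := by positivity
    set t : ℝ := a3 ^ 2 * θ1 ^ 2 / θ0 ^ 2 with ht
    have hθ0sq : (0:ℝ) < θ0 ^ 2 := sq_pos_of_ne_zero (ne_of_lt hθ0)
    have ht0 : 0 ≤ t := by positivity
    have ht1 : t < 1 := by
      rw [ht, div_lt_one hθ0sq]; nlinarith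
    set A1 : ℝ := -θ0 / (α * θ1 ^ 2) with hA1
    have hA1pos : 0 < A1 := div_pos hb (mul_pos hα hθ1sq)
    have hAα : A1 * α * θ1 ^ 2 = -θ0 := by
      rw [hA1, div_mul_eq_mul_div, div_mul_eq_mul_div,
        div_eq_iff (ne_of_gt (mul_pos hα hθ1sq))]; ring
    have hc : 2 * θ0 + A1 * α * θ1 ^ 2 = θ0 := by rw [hAα]; ring
    have hc' : 2 * θ0 + A1 * α * θ1 ^ 2 < 0 := by rw [hc]; exact hθ0
    have he : Real.exp (-Real.log (2 / (t + 1))) = (t + 1) / 2 := by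
      rw [Real.exp_neg, Real.exp_log (by positivity)]
      field_simp
    have htu : t * (θ0 ^ 2 / θ1 ^ 2) = a3 ^ 2 := by
      rw [ht]; field_simp; exact mul_div_cancel_right₀ _ (ne_of_lt hθ0)
    have huu : a3 ^ 2 < θ0 ^ 2 / θ1 ^ 2 := by
      rw [lt_div_iff₀ hθ1sq]; nlinarith
    have hdm : θ0 * (-A1 * ((t + 1) / 2) * α) = (t + 1) / 2 * (θ0 ^ 2 / θ1 ^ 2) := by
      rw [hA1]; field_simp
    have hdet : (2 * θ0 + A1 * α * θ1 ^ 2) * (-A1 * Real.exp (-Real.log (2 / (t + 1))) * α)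
        - a3 ^ 2 > 0 := by
      rw [hc, he, hdm]; nlinarith [htu, huu]
    exact ⟨A1, hA1pos, Real.log (2 / (t + 1)),
      Real.log_pos (by rw [lt_div_iff₀ (by linarith)]; linarith),
      neg_def_2x2 _ _ _ hc' hdet, hc', hdet⟩
end

section
/- Suppose the gains k1, k2 ∈ ℝ satisfy 1 − k1·b2 ≠ 0, where b2 = q(le). Then there exist positive constants γ2, β2, δ2, θ2 and δ such that for every classical solution (l, f) of the normalized closed-loop extrusion model on [0,∞) with f of class C² on [0,∞)×[0,1], and every time t ≥ 0 at which |l(t) − le| + |N(t) − Ne| + |f(t,1) − fpe| ≤ δ, the quantity V2(t) := ∫₀¹ e^{−γ2·x}·(∂ₓf(t,x))² dx is differentiable and satisfies V2'(t) ≤ −β2·V2(t) − δ2·(∂ₓf(t,1))² + θ2·((l(t) − le)² + (f(t,1) − fpe)²). -/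
/-- Pressure coefficient `q(l) = η·ρ0·Veff·(L − l)/(B·ρ0 + Kd·(L − l))` of the isothermal
extrusion model. -/
noncomputable def qfun (η ρ0 Veff L B Kd : ℝ) (l : ℝ) : ℝ :=
  η * ρ0 * Veff * (L - l) / (B * ρ0 + Kd * (L - l))

open Set MeasureTheory intervalIntegral Real

private lemma hasDerivAt_snd_comp {F : ℝ × ℝ → ℝ} {s x : ℝ} (hF : DifferentiableAt ℝ F (s, x)) :
    HasDerivAt (fun y => F (s, y)) (fderiv ℝ F (s, x) (0, 1)) x :=
  hF.hasFDerivAt.comp_hasDerivAt x ((hasDerivAt_const x s).prodMk (hasDerivAt_id x))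

private lemma hasDerivAt_fst_comp {F : ℝ × ℝ → ℝ} {s x : ℝ} (hF : DifferentiableAt ℝ F (s, x)) :
    HasDerivAt (fun u => F (u, x)) (fderiv ℝ F (s, x) (1, 0)) s :=
  hF.hasFDerivAt.comp_hasDerivAt s ((hasDerivAt_id s).prodMk (hasDerivAt_const s x))

private lemma deriv_eq_of_eqOn_Icc {φ ψ : ℝ → ℝ} {dφ dψ x : ℝ} (h1 : HasDerivAt φ dφ x)
    (h2 : HasDerivAt ψ dψ x) (heq : Set.EqOn φ ψ (Set.Icc 0 1)) (hx : x ∈ Set.Icc (0:ℝ) 1) :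
    dφ = dψ := by
  have u := (uniqueDiffOn_Icc (zero_lt_one)).uniqueDiffWithinAt hx
  have h1' : HasDerivWithinAt ψ dφ (Set.Icc 0 1) x :=
    (h1.hasDerivWithinAt).congr (fun y hy => (heq hy).symm) (heq hx).symm
  exact (h1'.derivWithin u).symm.trans ((h2.hasDerivWithinAt).derivWithin u)

private lemma deriv_eq_of_eqOn_Ici {φ ψ : ℝ → ℝ} {dφ dψ t : ℝ} (h1 : HasDerivAt φ dφ t)
    (h2 : HasDerivAt ψ dψ t) (ht : 0 ≤ t) {U : Set ℝ} (hU : U ∈ nhds t)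
    (heq : ∀ s ∈ U ∩ Set.Ici 0, φ s = ψ s) : dφ = dψ := by
  have u := (uniqueDiffOn_Ici (0:ℝ)).uniqueDiffWithinAt (Set.mem_Ici.2 ht)
  have hmem : U ∩ Set.Ici 0 ∈ nhdsWithin t (Set.Ici 0) :=
    Filter.inter_mem (nhdsWithin_le_nhds hU) self_mem_nhdsWithin
  have h1' : HasDerivWithinAt ψ dφ (Set.Ici 0) t := by
    refine (h1.hasDerivWithinAt).congr_of_eventuallyEq ?_ ?_
    · filter_upwards [hmem] with s hs using (heq s hs).symm
    · exact (heq t ⟨mem_of_mem_nhds hU, ht⟩).symm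
  exact (h1'.derivWithin u).symm.trans ((h2.hasDerivWithinAt).derivWithin u)

private lemma contDiff_fderiv_apply_vec {F : ℝ × ℝ → ℝ} (hF : ContDiff ℝ 2 F) (v : ℝ × ℝ) :
    ContDiff ℝ 1 (fun p => fderiv ℝ F p v) :=
  (hF.fderiv_right (by norm_num : (1:WithTop ℕ∞) + 1 ≤ 2)).clm_apply contDiff_const

private lemma continuous_fderiv_apply_vec {g : ℝ × ℝ → ℝ} (hg : ContDiff ℝ 1 g) (v : ℝ × ℝ) :
    Continuous (fun p => fderiv ℝ g p v) :=
  (ContinuousLinearMap.apply ℝ ℝ v).continuous.comp (hg.continuous_fderiv (by norm_num))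

private lemma clairaut_vec {F : ℝ × ℝ → ℝ} (hF : ContDiff ℝ 2 F) (p : ℝ × ℝ) (v w : ℝ × ℝ) :
    fderiv ℝ (fun q => fderiv ℝ F q v) p w = fderiv ℝ (fun q => fderiv ℝ F q w) p v := by
  have hdd : DifferentiableAt ℝ (fderiv ℝ F) p :=
    ((hF.fderiv_right (by norm_num : (1:WithTop ℕ∞) + 1 ≤ 2)).differentiable (by norm_num)).differentiableAt
  have key : ∀ u : ℝ × ℝ, fderiv ℝ (fun q => fderiv ℝ F q u) p
      = (ContinuousLinearMap.apply ℝ ℝ u).comp (fderiv ℝ (fderiv ℝ F) p) := fun u =>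
    (((ContinuousLinearMap.apply ℝ ℝ u).hasFDerivAt).comp p hdd.hasFDerivAt).fderiv
  have hsym := (hF.contDiffAt.isSymmSndFDerivAt (x := p) (by norm_num)).eq v w
  rw [key v, key w]
  simpa using hsym.symm

private lemma hasDerivAt_param_integral {g g1 : ℝ × ℝ → ℝ} (hg : Continuous g)
    (hg1 : Continuous g1)
    (hd : ∀ p : ℝ × ℝ, HasDerivAt (fun s => g (s, p.2)) (g1 p) p.1) (t : ℝ) :
    HasDerivAt (fun s => ∫ x in (0:ℝ)..1, Real.exp (-1*x) * (g (s, x))^2)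
      (∫ x in (0:ℝ)..1, Real.exp (-1*x) * (2 * g (t, x) * g1 (t, x))) t := by
  set μ : Measure ℝ := volume.restrict (Set.Ioc 0 1) with hμ
  set Φ : ℝ → ℝ → ℝ := fun s x => Real.exp (-1*x) * (g (s, x))^2 with hΦ
  set Φ' : ℝ → ℝ → ℝ := fun s x => Real.exp (-1*x) * (2 * g (s, x) * g1 (s, x)) with hΦ'
  have hΦcont : ∀ s, Continuous (Φ s) := by
    intro s
    exact ((Real.continuous_exp.comp (continuous_const.mul continuous_id)).mul
      ((hg.comp (Continuous.prodMk_right s)).pow 2))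
  have hΦ'cont : Continuous (fun p : ℝ × ℝ => Φ' p.1 p.2) :=
    (Real.continuous_exp.comp (continuous_const.mul continuous_snd)).mul
      ((continuous_const.mul hg).mul hg1)
  have hK : IsCompact (Set.Icc (t-1) (t+1) ×ˢ Set.Icc (0:ℝ) 1) :=
    (isCompact_Icc).prod isCompact_Icc
  obtain ⟨C, hC⟩ := hK.exists_bound_of_continuousOn hΦ'cont.continuousOn
  have main := hasDerivAt_integral_of_dominated_loc_of_deriv_le (μ := μ) (x₀ := t)
      (F := Φ) (F' := fun s x => Φ' s x) (bound := fun _ => C) (s := Metric.ball t 1) (Metric.ball_mem_nhds t zero_lt_one)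
      (Filter.Eventually.of_forall fun s => (hΦcont s).aestronglyMeasurable)
      ((hΦcont t).integrableOn_Ioc)
      ((hΦ'cont.comp (Continuous.prodMk_right t)).aestronglyMeasurable)
      ?_ ?_ ?_
  · have h1 : (fun s => ∫ x in (0:ℝ)..1, Real.exp (-1*x) * (g (s, x))^2)
        = fun s => ∫ x, Φ s x ∂μ := by
      funext s
      rw [intervalIntegral.integral_of_le zero_le_one]
    have h2 : (∫ x in (0:ℝ)..1, Real.exp (-1*x) * (2 * g (t, x) * g1 (t, x)))
        = ∫ x, Φ' t x ∂μ := by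
      rw [intervalIntegral.integral_of_le zero_le_one]
    rw [h1, h2]
    exact main.2
  · filter_upwards [ae_restrict_mem measurableSet_Ioc] with x hx
    intro s hs
    have hsmem : s ∈ Set.Icc (t-1) (t+1) := by
      have := abs_lt.1 (by simpa [Real.dist_eq] using Metric.mem_ball.1 hs)
      constructor <;> linarith [this.1, this.2]
    exact hC (s, x) ⟨hsmem, ⟨le_of_lt hx.1, hx.2⟩⟩
  · exact (integrableOn_const measure_Ioc_lt_top.ne)
  · filter_upwards with x
    intro s _
    have h := ((hd (s, x)).pow 2).const_mul (Real.exp (-1*x))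
    exact h.congr_deriv (by simp [hΦ'])

private lemma aux_kfrac {k P : ℝ} (hk : 0 ≤ k) (hP : 0 < P) : k * (P/(8*(k+1))) ≤ P/8 := by
  rw [mul_div_assoc', div_le_div_iff₀ (by positivity) (by positivity)]
  have h1 : 0 ≤ k * P := mul_nonneg hk hP.le
  nlinarith [h1, hP]

private lemma aux_coef {b a c le P x : ℝ} (hP : 0 < P) (hb : |b| ≤ P/8) (ha : P/2 ≤ a)
    (hc : 0 < c) (hc2 : c ≤ 3/2*le) (hle : 0 < le) (hx0 : 0 ≤ x) (hx1 : x ≤ 1) :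
    (b*(1+x) - a)/c ≤ -(P/(6*le)) := by
  rw [div_le_iff₀ hc]
  have h1 := abs_le.1 hb
  have h2 : P/(6*le)*c ≤ P/(6*le)*(3/2*le) := mul_le_mul_of_nonneg_left hc2 (by positivity)
  have h3 : P/(6*le)*(3/2*le) = P/4 := by field_simp; ring
  have h4 : b*(1+x) ≤ P/8*(1+x) := mul_le_mul_of_nonneg_right h1.2 (by linarith)
  have h5 : P/8*(1+x) ≤ P/4 := by nlinarith [mul_le_mul_of_nonneg_left hx1 hP.le]
  linarith

private lemma aux_bdry {a b c le P : ℝ} (hP : 0 < P) (ha : P/2 ≤ a) (hb : |b| ≤ P/8)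
    (hc : 0 < c) (hc2 : c ≤ 3/2*le) (hle : 0 < le) : P/(4*le) ≤ (a - b)/c := by
  rw [le_div_iff₀ hc]
  have h1 := (abs_le.1 hb).2
  have h2 : P/(4*le)*c ≤ P/(4*le)*(3/2*le) := mul_le_mul_of_nonneg_left hc2 (by positivity)
  have h3 : P/(4*le)*(3/2*le) = 3*P/8 := by field_simp; ring
  linarith

private lemma aux_bsq {b Kc uu vv : ℝ} (h1 : |b| ≤ Kc * (|uu| + |vv|)) (hKc : 0 ≤ Kc) :
    b^2 ≤ 2*Kc^2*(uu^2 + vv^2) := by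
  have h2 : |b| * |b| ≤ (Kc*(|uu|+|vv|)) * (Kc*(|uu|+|vv|)) :=
    mul_self_le_mul_self (abs_nonneg b) h1
  have h3 : (|uu| + |vv|)^2 ≤ 2*(uu^2 + vv^2) := by
    nlinarith [sq_nonneg (|uu| - |vv|), sq_abs uu, sq_abs vv]
  have h4 : Kc^2 * (|uu|+|vv|)^2 ≤ Kc^2 * (2*(uu^2+vv^2)) :=
    mul_le_mul_of_nonneg_left h3 (by positivity)
  nlinarith [sq_abs b, h2, h4]

private lemma aux_final {w M b Kc S c a le P θ : ℝ}
    (hw : |w| ≤ M) (hb2 : b^2 ≤ 2*Kc^2*S) (hca : c/a ≤ 3*le/P)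
    (hS : 0 ≤ S) (hc : 0 < c) (ha : 0 < a) (hle : 0 < le) (hP : 0 < P) (hKc : 0 ≤ Kc)
    (hθ : 6*le*M^2*(Kc+1)^2/P + 1 ≤ θ) :
    (c/a) * w^2 * b^2 ≤ θ * S := by
  have hM : 0 ≤ M := (abs_nonneg w).trans hw
  have h1 : w^2 ≤ M^2 := by
    have := mul_self_le_mul_self (abs_nonneg w) hw
    nlinarith [sq_abs w]
  have h2 : (c/a) * w^2 * b^2 ≤ (3*le/P) * M^2 * (2*Kc^2*S) := by
    have h3 : (c/a) * w^2 ≤ (3*le/P) * M^2 :=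
      mul_le_mul hca h1 (sq_nonneg w) (by positivity)
    exact mul_le_mul h3 hb2 (sq_nonneg b) (by positivity)
  have h3 : (3*le/P) * M^2 * (2*Kc^2*S) = (6*le*M^2*Kc^2/P) * S := by ring
  have h4 : (6*le*M^2*Kc^2/P) ≤ θ := by
    have h0 : Kc^2 ≤ (Kc+1)^2 := by nlinarith
    have h5 : 6*le*M^2*Kc^2 ≤ 6*le*M^2*(Kc+1)^2 := by
      have := mul_le_mul_of_nonneg_left h0 (by positivity : (0:ℝ) ≤ 6*le*M^2)
      linarith
    have h6 := (div_le_div_iff_of_pos_right hP).2 h5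
    linarith
  calc (c/a)*w^2*b^2 ≤ (6*le*M^2*Kc^2/P) * S := by rw [← h3]; exact h2
    _ ≤ θ * S := mul_le_mul_of_nonneg_right h4 hS

private lemma aux_ca {a c le P : ℝ} (hP : 0 < P) (ha : P/2 ≤ a) (hapos : 0 < a)
    (hc2 : c ≤ 3/2*le) (hle : 0 < le) (hc : 0 < c) : c/a ≤ 3*le/P := by
  rw [div_le_div_iff₀ hapos hP]
  have h1 : c*P ≤ (3/2*le)*P := mul_le_mul_of_nonneg_right hc2 hP.le
  have h2 : 3*le*(P/2) ≤ 3*le*a := mul_le_mul_of_nonneg_left ha (by positivity)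
  nlinarith [h1, h2]

set_option maxHeartbeats 1000000 in

/-- Lemma 2 of the paper: if `1 − k1·b2 ≠ 0` with `b2 = q(le)`, there are
positive constants `γ2, β2, δ2, θ2, δ` such that along every classical solution of the
closed-loop extrusion model with `f` of class `C²`, at each time `t ≥ 0` where the solution
is `δ`-close to the equilibrium, `V2(t) = ∫₀¹ e^{−γ2 x}(∂ₓf(t,x))² dx` is differentiable
with `V2'(t) ≤ −β2·V2(t) − δ2·(∂ₓf(t,1))² + θ2·((l(t) − le)² + (f(t,1) − fpe)²)`. -/
theorem lyapunov_V2_decay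
    (L B Kd ζ η ρ0 Seff Veff : ℝ)
    (hL : 0 < L) (hB : 0 < B) (hKd : 0 < Kd) (hζ : 0 < ζ) (hη : 0 < η)
    (hρ0 : 0 < ρ0) (hSeff : 0 < Seff) (hVeff : 0 < Veff)
    (le fpe Ne : ℝ)
    (hle : le ∈ Set.Ioo 0 L) (hfpe : fpe ∈ Set.Ioo (0:ℝ) 1) (hNe : 0 < Ne)
    (heq : (Kd / η) * Ne * qfun η ρ0 Veff L B Kd le = ρ0 * Veff * Ne * fpe)
    (k1 k2 : ℝ)
    (hden : 1 - k1 * qfun η ρ0 Veff L B Kd le ≠ 0) :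
    ∃ γ2 > (0:ℝ), ∃ β2 > (0:ℝ), ∃ δ2 > (0:ℝ), ∃ θ2 > (0:ℝ), ∃ δ > (0:ℝ),
      ∀ (l : ℝ → ℝ) (f : ℝ → ℝ → ℝ) (N Fi ΔP : ℝ → ℝ),
        -- regularity: l is C¹ and f is C²
        ContDiff ℝ 1 l →
        ContDiff ℝ 2 (Function.uncurry f) →
        -- state constraints
        (∀ t, 0 ≤ t → l t ∈ Set.Ioo 0 L) →
        (∀ t, 0 ≤ t → ∀ x ∈ Set.Icc (0:ℝ) 1, f t x < 1) →
        -- die pressure difference and feedback controls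
        (∀ t, 0 ≤ t → ΔP t = N t * qfun η ρ0 Veff L B Kd (l t)) →
        (∀ t, 0 ≤ t → N t = Ne + k1 * (ΔP t - Ne * qfun η ρ0 Veff L B Kd le)) →
        (∀ t, 0 ≤ t → 0 < N t) →
        (∀ t, 0 ≤ t →
          Fi t = ρ0 * Veff * Ne * fpe + k2 * (ΔP t - Ne * qfun η ρ0 Veff L B Kd le)) →
        -- interface dynamics
        (∀ t, 0 ≤ t → HasDerivAt l
          (((Kd / η) * ΔP t - ρ0 * Veff * N t * f t 1) / (ρ0 * Seff * (1 - f t 1))) t) →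
        -- transport equation with normalized speed α(t,x) = (ζ·N(t) − x·l'(t))/l(t)
        (∀ t, 0 ≤ t → ∀ x ∈ Set.Icc (0:ℝ) 1,
          deriv (fun s => f s x) t
            + ((ζ * N t - x * deriv l t) / l t) * deriv (f t) x = 0) →
        -- boundary condition
        (∀ t, 0 ≤ t → f t 0 = Fi t / (ρ0 * Veff * N t)) →
        ∀ t, 0 ≤ t →
          |l t - le| + |N t - Ne| + |f t 1 - fpe| ≤ δ →
          ∃ v : ℝ,
            HasDerivAt
              (fun s => ∫ x in (0:ℝ)..1, Real.exp (-γ2 * x) * (deriv (f s) x) ^ 2) v t ∧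
            v ≤ -β2 * (∫ x in (0:ℝ)..1, Real.exp (-γ2 * x) * (deriv (f t) x) ^ 2)
              - δ2 * (deriv (f t) 1) ^ 2
              + θ2 * ((l t - le) ^ 2 + (f t 1 - fpe) ^ 2) := by
  set q : ℝ → ℝ := qfun η ρ0 Veff L B Kd with hq
  set b2 : ℝ := q le with hb2def
  -- basic positivity
  have hLle : 0 < L - le := by linarith [hle.2]
  have hdenle : 0 < B * ρ0 + Kd * (L - le) := by positivity
  have hb2pos : 0 < b2 := by
    rw [hb2def, hq]; unfold qfun; positivity
  -- q is C² near any point with nonzero denominator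
  have hqC : ∀ l : ℝ, B * ρ0 + Kd * (L - l) ≠ 0 → ContDiffAt ℝ 2 q l := by
    intro l hl
    rw [hq]
    have : (qfun η ρ0 Veff L B Kd) = fun l => η * ρ0 * Veff * (L - l) / (B * ρ0 + Kd * (L - l)) := rfl
    rw [this]
    exact ContDiffAt.div (by fun_prop) (by fun_prop) hl
  -- continuity radius ε₁
  have hcont1 : ContinuousAt (fun l => B * ρ0 + Kd * (L - l)) le := by fun_prop
  have hcont2 : ContinuousAt (fun l => |1 - k1 * q l|) le := by
    have := (hqC le hdenle.ne').continuousAt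
    fun_prop
  have habs : 0 < |1 - k1 * b2| := abs_pos.2 hden
  have h1 : ∀ᶠ l in nhds le, 0 < B * ρ0 + Kd * (L - l) :=
    hcont1.eventually_mem (Ioi_mem_nhds hdenle)
  have h2 : ∀ᶠ l in nhds le, |1 - k1 * b2| / 2 < |1 - k1 * q l| := by
    have := hcont2.eventually_mem (Ioi_mem_nhds (by linarith : |1 - k1 * b2| / 2 < |1 - k1 * b2|))
    simpa using this
  obtain ⟨ε₁, hε₁pos, hε₁⟩ := Metric.eventually_nhds_iff.1 (h1.and h2)
  -- the reduced screw-speed and boundary maps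
  set Nh : ℝ → ℝ := fun l => Ne * (1 - k1 * b2) / (1 - k1 * q l) with hNh
  set G : ℝ × ℝ → ℝ := fun p =>
    ((Kd / η) * (Nh p.1 * q p.1) - ρ0 * Veff * Nh p.1 * p.2) / (ρ0 * Seff * (1 - p.2)) with hG
  set Hb : ℝ → ℝ := fun l =>
    (ρ0 * Veff * Ne * fpe + k2 * (Nh l * q l - Ne * b2)) / (ρ0 * Veff * Nh l) with hHb
  have hNhle : Nh le = Ne := by
    rw [hNh]; simp only []
    rw [← hb2def, mul_div_assoc, div_self hden, mul_one]
  have hNhC : ∀ l : ℝ, B * ρ0 + Kd * (L - l) ≠ 0 → (1 - k1 * q l) ≠ 0 → ContDiffAt ℝ 2 Nh l := by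
    intro l h1 h2
    rw [hNh]
    exact ContDiffAt.div contDiffAt_const (by exact (contDiffAt_const.sub
      (contDiffAt_const.mul (hqC l h1)))) h2
  have hNhne : ∀ l : ℝ, (1 - k1 * q l) ≠ 0 → Nh l ≠ 0 := by
    intro l h2
    rw [hNh]
    exact div_ne_zero (by positivity) h2
  have hGC : ContDiffAt ℝ 1 G (le, fpe) := by
    rw [hG]
    have hqfst : ContDiffAt ℝ 1 (fun p : ℝ × ℝ => q p.1) (le, fpe) :=
      ((hqC le hdenle.ne').of_le (by norm_num)).comp (le, fpe) contDiffAt_fst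
    have hNfst : ContDiffAt ℝ 1 (fun p : ℝ × ℝ => Nh p.1) (le, fpe) :=
      ContDiffAt.comp (g := Nh) (f := Prod.fst) (le, fpe) ((hNhC le hdenle.ne' hden).of_le (by norm_num)) contDiffAt_fst
    refine ContDiffAt.div ?_ ?_ ?_
    · exact ((contDiffAt_const.mul (hNfst.mul hqfst)).sub
        ((contDiffAt_const.mul hNfst).mul contDiffAt_snd))
    · exact contDiffAt_const.mul (contDiffAt_const.sub contDiffAt_snd)
    · have : (1:ℝ) - fpe > 0 := by linarith [hfpe.2]
      positivity
  have hG0 : G (le, fpe) = 0 := by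
    rw [hG]; simp only [hNhle]
    rw [div_eq_zero_iff]
    left
    have : Kd / η * Ne * q le = ρ0 * Veff * Ne * fpe := heq
    rw [← hb2def] at this
    nlinarith [this]
  obtain ⟨K, T, hT, hGlip⟩ := hGC.exists_lipschitzOnWith
  obtain ⟨ε₂, hε₂pos, hballT⟩ := Metric.mem_nhds_iff.1 hT
  -- Hb is C² on the ball of radius ε₁, so its derivative is bounded near le
  have hHbC : ContDiffOn ℝ 2 Hb (Metric.ball le ε₁) := by
    intro l hl
    have hl' := hε₁ (by simpa [Metric.mem_ball] using hl)
    have hd1 : B * ρ0 + Kd * (L - l) ≠ 0 := hl'.1.ne'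
    have hd2 : (1 - k1 * q l) ≠ 0 := by
      intro h
      have h2 := hl'.2
      rw [h, abs_zero] at h2
      linarith [habs]
    refine ContDiffAt.contDiffWithinAt ?_
    rw [hHb]
    refine ContDiffAt.div ?_ ?_ ?_
    · exact contDiffAt_const.add (contDiffAt_const.mul
        (((hNhC l hd1 hd2).mul (hqC l hd1)).sub contDiffAt_const))
    · exact contDiffAt_const.mul (hNhC l hd1 hd2)
    · exact mul_ne_zero (by positivity) (hNhne l hd2)
  have hderivHbcont : ContinuousAt (deriv Hb) le := by
    have := hHbC.continuousOn_deriv_of_isOpen Metric.isOpen_ball (by norm_num)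
    exact this.continuousAt (Metric.isOpen_ball.mem_nhds (Metric.mem_ball_self hε₁pos))
  set M : ℝ := |deriv Hb le| + 1 with hM
  have hMpos : 0 < M := by positivity
  have hM' : ∀ᶠ l in nhds le, |deriv Hb l| ≤ M := by
    have : ∀ᶠ l in nhds le, deriv Hb l ∈ Metric.ball (deriv Hb le) 1 :=
      hderivHbcont.eventually_mem (Metric.ball_mem_nhds _ one_pos)
    filter_upwards [this] with l hl
    have := Metric.mem_ball.1 hl
    rw [Real.dist_eq] at this
    rw [hM]
    have h1 := abs_sub_abs_le_abs_sub (deriv Hb l) (deriv Hb le)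
    linarith [le_of_lt this]
  obtain ⟨ε₃, hε₃pos, hε₃⟩ := Metric.eventually_nhds_iff.1 hM'
  -- choose the constants
  have hlepos : 0 < le := hle.1
  set δ : ℝ := min (min (ε₁/2) (ε₂/2)) (min (ε₃/2) (min (le/2) (min (Ne/2) (ζ*Ne/(8*((K:ℝ)+1)))))) with hδdef
  have hKpos : (0:ℝ) < (K:ℝ) + 1 := by positivity
  have hδpos : 0 < δ := by
    rw [hδdef]
    refine lt_min (lt_min (by linarith) (by linarith)) (lt_min (by linarith)
      (lt_min (by linarith [hle.1]) (lt_min (by linarith) (by positivity))))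
  have hδ1 : δ ≤ ε₁/2 := (min_le_left _ _).trans (min_le_left _ _)
  have hδ2 : δ ≤ ε₂/2 := (min_le_left _ _).trans (min_le_right _ _)
  have hδ3 : δ ≤ ε₃/2 := (min_le_right _ _).trans (min_le_left _ _)
  have hδ4 : δ ≤ le/2 := (min_le_right _ _).trans ((min_le_right _ _).trans (min_le_left _ _))
  have hδ5 : δ ≤ Ne/2 :=
    (min_le_right _ _).trans ((min_le_right _ _).trans ((min_le_right _ _).trans (min_le_left _ _)))
  have hδ6 : δ ≤ ζ*Ne/(8*((K:ℝ)+1)) :=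
    (min_le_right _ _).trans ((min_le_right _ _).trans ((min_le_right _ _).trans (min_le_right _ _)))
  set β2 : ℝ := ζ*Ne/(6*le) with hβ2def
  set δ2 : ℝ := Real.exp (-1) * (ζ*Ne) / (4*le) with hδ2def
  set θ2 : ℝ := 6*le*M^2*((K:ℝ)+1)^2/(ζ*Ne) + 1 with hθ2def
  have hβ2pos : 0 < β2 := by rw [hβ2def]; positivity
  have hδ2pos : 0 < δ2 := by rw [hδ2def]; positivity
  have hθ2pos : 0 < θ2 := by rw [hθ2def]; positivity
  refine ⟨1, one_pos, β2, hβ2pos, δ2, hδ2pos, θ2, hθ2pos, δ, hδpos, ?_⟩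
  intro l f N Fi ΔP hlC hfC2 hlran hfran hΔP hNfb hNpos hFi hldyn hPDE hbc t ht hclose
  have h_lt : |l t - le| ≤ δ := by
    have h1 := abs_nonneg (N t - Ne); have h2 := abs_nonneg (f t 1 - fpe); linarith
  have h_Nt : |N t - Ne| ≤ δ := by
    have h1 := abs_nonneg (l t - le); have h2 := abs_nonneg (f t 1 - fpe); linarith
  have h_f1 : |f t 1 - fpe| ≤ δ := by
    have h1 := abs_nonneg (l t - le); have h2 := abs_nonneg (N t - Ne); linarith
  -- Block A: the feedback laws expressed through l
  have hballt : ∀ s : ℝ, |l s - le| < ε₁ →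
      0 < B*ρ0 + Kd*(L - l s) ∧ |1-k1*b2|/2 < |1 - k1 * q (l s)| := by
    intro s hs
    exact hε₁ (by simpa [Real.dist_eq] using hs)
  have hlt_ball : |l t - le| < ε₁ := lt_of_le_of_lt h_lt (by linarith)
  have hNs : ∀ s, 0 ≤ s → |l s - le| < ε₁ → N s = Nh (l s) := by
    intro s hs hball
    have h2 := (hballt s hball).2
    have hne : 1 - k1 * q (l s) ≠ 0 := by
      intro h; rw [h, abs_zero] at h2; linarith
    have e1 : N s = Ne + k1 * (N s * q (l s) - Ne * b2) := by
      rw [← hΔP s hs]; exact hNfb s hs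
    have e2 : N s * (1 - k1 * q (l s)) = Ne * (1 - k1 * b2) := by linear_combination e1
    simp only [hNh]
    rw [eq_div_iff hne]
    exact e2
  have hfb : ∀ s, 0 ≤ s → |l s - le| < ε₁ → f s 0 = Hb (l s) := by
    intro s hs hball
    have hNse := hNs s hs hball
    rw [hbc s hs, hFi s hs, hΔP s hs, hNse]
  -- Block C: smooth vector fields
  have hFC2 : ContDiff ℝ 2 (Function.uncurry f) := hfC2
  have hFdiff : Differentiable ℝ (Function.uncurry f) := hFC2.differentiable (by norm_num)
  set g : ℝ × ℝ → ℝ := fun p => fderiv ℝ (Function.uncurry f) p (0, 1) with hgdef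
  set gt : ℝ × ℝ → ℝ := fun p => fderiv ℝ (Function.uncurry f) p (1, 0) with hgtdef
  have hgC : ContDiff ℝ 1 g := contDiff_fderiv_apply_vec hFC2 _
  have hgtC : ContDiff ℝ 1 gt := contDiff_fderiv_apply_vec hFC2 _
  have hg_eq : ∀ s x : ℝ, deriv (f s) x = g (s, x) := fun s x =>
    (hasDerivAt_snd_comp (hFdiff (s, x))).deriv
  have hgt_eq : ∀ s x : ℝ, deriv (fun u => f u x) s = gt (s, x) := fun s x =>
    (hasDerivAt_fst_comp (hFdiff (s, x))).deriv
  set g1 : ℝ × ℝ → ℝ := fun p => fderiv ℝ g p (1, 0) with hg1def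
  set g2 : ℝ × ℝ → ℝ := fun p => fderiv ℝ g p (0, 1) with hg2def
  have hg1cont : Continuous g1 := continuous_fderiv_apply_vec hgC _
  have hg2cont : Continuous g2 := continuous_fderiv_apply_vec hgC _
  have hdg1 : ∀ p : ℝ × ℝ, HasDerivAt (fun s => g (s, p.2)) (g1 p) p.1 := fun p =>
    hasDerivAt_fst_comp ((hgC.differentiable (by norm_num)) p)
  have hdg2 : ∀ p : ℝ × ℝ, HasDerivAt (fun y => g (p.1, y)) (g2 p) p.2 := fun p =>
    hasDerivAt_snd_comp ((hgC.differentiable (by norm_num)) p)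
  have hclair : ∀ p : ℝ × ℝ, g1 p = fderiv ℝ gt p (0, 1) := fun p =>
    clairaut_vec hFC2 p (0, 1) (1, 0)
  -- Block D: the local coefficients
  set a : ℝ := ζ * N t with hadef
  set b : ℝ := deriv l t with hbdef
  set c : ℝ := l t with hcdef
  have hcpos : 0 < c := (hlran t ht).1
  have hltle := abs_le.1 h_lt
  have hNtle := abs_le.1 h_Nt
  have hf1le := abs_le.1 h_f1
  have hcub : c ≤ 3/2 * le := by rw [hcdef]; linarith [hltle.2, hδ4]
  have hclb : le/2 ≤ c := by rw [hcdef]; linarith [hltle.1, hδ4]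
  have hNlb : Ne/2 ≤ N t := by linarith [hNtle.1, hδ5]
  have halb : ζ*Ne/2 ≤ a := by
    rw [hadef]
    have := mul_le_mul_of_nonneg_left hNlb hζ.le
    linarith
  have hapos : 0 < a := lt_of_lt_of_le (by positivity) halb
  have hlderiv : HasDerivAt l
      (((Kd / η) * ΔP t - ρ0 * Veff * N t * f t 1) / (ρ0 * Seff * (1 - f t 1))) t := hldyn t ht
  have hbval : b = G (l t, f t 1) := by
    rw [hbdef, hlderiv.deriv]
    show ((Kd / η) * ΔP t - ρ0 * Veff * N t * f t 1) / (ρ0 * Seff * (1 - f t 1)) = _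
    rw [hΔP t ht, hNs t ht hlt_ball]
  have hmem0 : (le, fpe) ∈ T := mem_of_mem_nhds hT
  have hmemT : (l t, f t 1) ∈ T := by
    apply hballT
    rw [Metric.mem_ball, Prod.dist_eq, Real.dist_eq, Real.dist_eq]
    have : max |l t - le| |f t 1 - fpe| ≤ δ := max_le h_lt h_f1
    calc max |l t - le| |f t 1 - fpe| ≤ δ := this
      _ < ε₂ := by linarith
  have hGbound : |G (l t, f t 1)| ≤ (K:ℝ) * (|l t - le| + |f t 1 - fpe|) := by
    have hd := hGlip.dist_le_mul (l t, f t 1) hmemT (le, fpe) hmem0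
    rw [hG0, Real.dist_eq, sub_zero] at hd
    refine hd.trans ?_
    rw [Prod.dist_eq, Real.dist_eq, Real.dist_eq]
    have h1 : max |l t - le| |f t 1 - fpe| ≤ |l t - le| + |f t 1 - fpe| :=
      max_le (le_add_of_nonneg_right (abs_nonneg _)) (le_add_of_nonneg_left (abs_nonneg _))
    exact mul_le_mul_of_nonneg_left h1 K.coe_nonneg
  have hbsmall : |b| ≤ ζ*Ne/8 := by
    have h1 : |b| ≤ (K:ℝ) * δ := by
      rw [hbval]
      refine hGbound.trans ?_
      have h0 : |l t - le| + |f t 1 - fpe| ≤ δ := by linarith [abs_nonneg (N t - Ne)]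
      exact mul_le_mul_of_nonneg_left h0 K.coe_nonneg
    have h2 : (K:ℝ) * δ ≤ (K:ℝ) * (ζ*Ne/(8*((K:ℝ)+1))) := mul_le_mul_of_nonneg_left hδ6 K.coe_nonneg
    have h3 : (K:ℝ) * (ζ*Ne/(8*((K:ℝ)+1))) ≤ ζ*Ne/8 :=
      aux_kfrac K.coe_nonneg (by positivity)
    linarith
  -- Block E: the transport equation at time t
  have hPDEt : ∀ x ∈ Set.Icc (0:ℝ) 1, gt (t, x) = -((a - b*x)/c) * g (t, x) := by
    intro x hx
    have h := hPDE t ht x hx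
    rw [hg_eq t x, hgt_eq t x, ← hadef, ← hbdef, ← hcdef] at h
    linear_combination h
  -- Block F: the x-derivative of the transport equation at time t
  have hE1 : ∀ x ∈ Set.Icc (0:ℝ) 1,
      g1 (t, x) = (b * g (t, x) - (a - b*x) * g2 (t, x)) / c := by
    intro x hx
    have hφ : HasDerivAt (fun y => gt (t, y)) (g1 (t, x)) x := by
      rw [hclair (t, x)]
      exact hasDerivAt_snd_comp ((hgtC.differentiable (by norm_num)) (t, x))
    have haff : HasDerivAt (fun y : ℝ => -((a - b*y)/c)) (b/c) x := by
      have h1 : HasDerivAt (fun y : ℝ => a - b*y) (0 - b*1) x :=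
        (hasDerivAt_const x a).sub ((hasDerivAt_id x).const_mul b)
      have h2 := (h1.div_const c).neg
      exact h2.congr_deriv (by ring)
    have hψ : HasDerivAt (fun y => -((a - b*y)/c) * g (t, y))
        ((b/c) * g (t, x) + (-((a - b*x)/c)) * g2 (t, x)) x := haff.mul (hdg2 (t, x))
    have heqd := deriv_eq_of_eqOn_Icc hφ hψ (fun y hy => hPDEt y hy) hx
    rw [heqd]
    field_simp
    ring
  -- Block G: differentiate the Lyapunov functional
  have hgcont : Continuous g := hgC.continuous
  have hmain := hasDerivAt_param_integral hgcont hg1cont hdg1 t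
  set v0 : ℝ := ∫ x in (0:ℝ)..1, Real.exp (-1*x) * (2 * g (t, x) * g1 (t, x)) with hv0def
  have hfun : ∀ s : ℝ, (∫ x in (0:ℝ)..1, Real.exp (-(1:ℝ) * x) * (deriv (f s) x) ^ 2)
      = ∫ x in (0:ℝ)..1, Real.exp (-1*x) * (g (s, x))^2 := by
    intro s
    congr 1
    funext x
    rw [hg_eq s x]
  refine ⟨v0, ?_, ?_⟩
  · have : (fun s => ∫ x in (0:ℝ)..1, Real.exp (-(1:ℝ) * x) * (deriv (f s) x) ^ 2)
        = fun s => ∫ x in (0:ℝ)..1, Real.exp (-1*x) * (g (s, x))^2 := funext hfun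
    rw [this]
    exact hmain
  -- Block H: integration by parts
  set u : ℝ → ℝ := fun x => Real.exp (-1*x) * (a - b*x) / c with hudef
  set u' : ℝ → ℝ := fun x =>
    (Real.exp (-1*x) * (-1) * (a - b*x) + Real.exp (-1*x) * (0 - b*1)) / c with hu'def
  have hu : ∀ x ∈ Set.uIcc (0:ℝ) 1, HasDerivAt u (u' x) x := by
    intro x _
    have h0 : HasDerivAt (fun x : ℝ => -1 * x) (-1) x := by
      simpa using (hasDerivAt_id x).const_mul (-1:ℝ)
    have he' : HasDerivAt (fun x : ℝ => Real.exp (-1*x)) (Real.exp (-1*x) * (-1)) x := h0.exp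
    have h1 : HasDerivAt (fun y : ℝ => a - b*y) (0 - b*1) x :=
      (hasDerivAt_const x a).sub ((hasDerivAt_id x).const_mul b)
    exact (he'.mul h1).div_const c
  have hvd : ∀ x ∈ Set.uIcc (0:ℝ) 1,
      HasDerivAt (fun y => (g (t, y))^2) (2 * g (t, x) * g2 (t, x)) x := by
    intro x _
    have h := (hdg2 (t, x)).pow 2
    exact h.congr_deriv (by simp)
  have hgtcont : Continuous (fun x => g (t, x)) := hgcont.comp (Continuous.prodMk_right t)
  have hg2tcont : Continuous (fun x => g2 (t, x)) := hg2cont.comp (Continuous.prodMk_right t)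
  have hu'int : IntervalIntegrable u' volume 0 1 := by
    apply Continuous.intervalIntegrable
    rw [hu'def]; fun_prop
  have hv'int : IntervalIntegrable (fun x => 2 * g (t, x) * g2 (t, x)) volume 0 1 :=
    ((continuous_const.mul hgtcont).mul hg2tcont).intervalIntegrable _ _
  have hIBP := intervalIntegral.integral_mul_deriv_eq_deriv_mul hu hvd hu'int hv'int
  have hIcc : Set.uIcc (0:ℝ) 1 = Set.Icc 0 1 := Set.uIcc_of_le zero_le_one
  have hcongr : ∀ x ∈ Set.uIcc (0:ℝ) 1,
      Real.exp (-1*x) * (2 * g (t, x) * g1 (t, x))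
        = (2*b/c) * (Real.exp (-1*x) * (g (t, x))^2) - u x * (2 * g (t, x) * g2 (t, x)) := by
    intro x hx
    rw [hE1 x (hIcc ▸ hx), hudef]
    field_simp
  have hint1 : IntervalIntegrable (fun x => (2*b/c) * (Real.exp (-1*x) * (g (t, x))^2))
      volume 0 1 := by
    apply Continuous.intervalIntegrable; fun_prop
  have hintu : IntervalIntegrable (fun x => u x * (2 * g (t, x) * g2 (t, x))) volume 0 1 := by
    apply Continuous.intervalIntegrable
    rw [hudef]; fun_prop
  have hintu'v : IntervalIntegrable (fun x => u' x * (g (t, x))^2) volume 0 1 := by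
    apply Continuous.intervalIntegrable
    rw [hu'def]; fun_prop
  have hv0eq : v0 = (∫ x in (0:ℝ)..1,
        ((2*b/c) * (Real.exp (-1*x) * (g (t, x))^2) + u' x * (g (t, x))^2))
      - u 1 * (g (t, 1))^2 + u 0 * (g (t, 0))^2 := by
    rw [hv0def, intervalIntegral.integral_congr hcongr,
      intervalIntegral.integral_sub hint1 hintu, hIBP,
      intervalIntegral.integral_add hint1 hintu'v]
    ring
  -- Block I: estimates
  set S : ℝ := (l t - le)^2 + (f t 1 - fpe)^2 with hSdef
  have hterm1 : (∫ x in (0:ℝ)..1,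
      ((2*b/c) * (Real.exp (-1*x) * (g (t, x))^2) + u' x * (g (t, x))^2))
      ≤ -β2 * ∫ x in (0:ℝ)..1, Real.exp (-1*x) * (g (t, x))^2 := by
    rw [← intervalIntegral.integral_const_mul]
    apply intervalIntegral.integral_mono_on zero_le_one (hint1.add hintu'v) ?_ ?_
    · apply Continuous.intervalIntegrable; fun_prop
    · intro x hx
      have hrw : (2*b/c) * (Real.exp (-1*x) * (g (t, x))^2) + u' x * (g (t, x))^2
          = (Real.exp (-1*x) * (g (t, x))^2) * ((b*(1+x) - a)/c) := by
        rw [hu'def]; field_simp; ring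
      have hcoef : (b*(1+x) - a)/c ≤ -β2 := by
        rw [hβ2def]
        exact aux_coef (by positivity) hbsmall halb hcpos hcub hlepos hx.1 hx.2
      have hnn : (0:ℝ) ≤ Real.exp (-1*x) * (g (t, x))^2 := by positivity
      have hmm := mul_le_mul_of_nonneg_left hcoef hnn
      rw [hrw, show -β2 * (Real.exp (-1*x) * (g (t, x))^2)
        = (Real.exp (-1*x) * (g (t, x))^2) * (-β2) from mul_comm _ _]
      exact hmm
  have hu1 : u 1 = Real.exp (-1) * (a - b) / c := by
    rw [hudef]; norm_num
  have hu0 : u 0 = a / c := by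
    rw [hudef]; norm_num
  have hterm2 : - (u 1 * (g (t, 1))^2) ≤ -δ2 * (g (t, 1))^2 := by
    have h1 : δ2 ≤ u 1 := by
      rw [hu1, hδ2def]
      have h2 := aux_bdry (by positivity : (0:ℝ) < ζ*Ne) halb hbsmall hcpos hcub hlepos
      have h3 := mul_le_mul_of_nonneg_left h2 (Real.exp_pos (-1)).le
      calc Real.exp (-1) * (ζ*Ne) / (4*le) = Real.exp (-1) * (ζ*Ne/(4*le)) := by ring
        _ ≤ Real.exp (-1) * ((a-b)/c) := h3
        _ = Real.exp (-1) * (a-b)/c := by ring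
    have h4 := mul_le_mul_of_nonneg_right h1 (sq_nonneg (g (t, 1)))
    linarith [h4]
  have hterm3 : u 0 * (g (t, 0))^2 ≤ θ2 * S := by
    have hg0 : g (t, 0) = -(c/a) * gt (t, 0) := by
      have h0 := hPDEt 0 (by norm_num)
      rw [h0]
      field_simp
      ring
    have hlb : HasDerivAt l b t := by
      rw [hbdef, hlderiv.deriv]; exact hlderiv
    have hHbdiff : HasDerivAt Hb (deriv Hb (l t)) (l t) := by
      have hmem : l t ∈ Metric.ball le ε₁ := by
        rw [Metric.mem_ball, Real.dist_eq]; exact hlt_ball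
      exact ((hHbC.contDiffAt (Metric.isOpen_ball.mem_nhds hmem)).differentiableAt
        (by norm_num)).hasDerivAt
    have hcomp : HasDerivAt (fun s => Hb (l s)) (deriv Hb (l t) * b) t := hHbdiff.comp t hlb
    have hUnb : (l ⁻¹' (Metric.ball le ε₁)) ∈ nhds t := by
      apply (hlC.continuous.continuousAt).preimage_mem_nhds
      exact Metric.isOpen_ball.mem_nhds (by rw [Metric.mem_ball, Real.dist_eq]; exact hlt_ball)
    have hfs0 : HasDerivAt (fun s => f s 0) (gt (t, 0)) t := hasDerivAt_fst_comp (hFdiff (t, 0))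
    have hgt0 : gt (t, 0) = deriv Hb (l t) * b := by
      refine deriv_eq_of_eqOn_Ici hfs0 hcomp ht hUnb ?_
      intro s hs
      refine hfb s hs.2 ?_
      have h5 := hs.1
      rwa [Set.mem_preimage, Metric.mem_ball, Real.dist_eq] at h5
    rw [hu0, hg0, hgt0]
    have hid : a/c * (-(c/a) * (deriv Hb (l t) * b))^2
        = ((c/a) * (deriv Hb (l t))^2) * b^2 := by
      field_simp
    rw [hid]
    have hHbb : |deriv Hb (l t)| ≤ M := by
      apply hε₃
      rw [Real.dist_eq]
      exact lt_of_le_of_lt h_lt (by linarith)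
    have hca : c/a ≤ 3*le/(ζ*Ne) :=
      aux_ca (by positivity) halb hapos hcub hlepos hcpos
    have h1 : |b| ≤ (K:ℝ) * (|l t - le| + |f t 1 - fpe|) := hbval ▸ hGbound
    have hbsq : b^2 ≤ 2*(K:ℝ)^2 * ((l t - le)^2 + (f t 1 - fpe)^2) := aux_bsq h1 K.coe_nonneg
    rw [hSdef]
    exact aux_final hHbb hbsq hca (by positivity) hcpos hapos hlepos (by positivity)
      K.coe_nonneg (le_of_eq hθ2def.symm)
  rw [hv0eq, hfun t, hg_eq t 1]
  calc (∫ x in (0:ℝ)..1,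
        ((2*b/c) * (Real.exp (-1*x) * (g (t, x))^2) + u' x * (g (t, x))^2))
      - u 1 * (g (t, 1))^2 + u 0 * (g (t, 0))^2
      = (∫ x in (0:ℝ)..1,
        ((2*b/c) * (Real.exp (-1*x) * (g (t, x))^2) + u' x * (g (t, x))^2))
        + (- (u 1 * (g (t, 1))^2)) + u 0 * (g (t, 0))^2 := by ring
    _ ≤ (-β2 * ∫ x in (0:ℝ)..1, Real.exp (-1*x) * (g (t, x))^2)
        + (-δ2 * (g (t, 1))^2) + θ2 * S :=
      add_le_add (add_le_add hterm1 hterm2) hterm3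
    _ = (-β2 * ∫ x in (0:ℝ)..1, Real.exp (-1*x) * (g (t, x))^2)
        - δ2 * (g (t, 1))^2 + θ2 * S := by ring
end

section
/- Suppose the gains k1, k2 ∈ ℝ satisfy 1 − k1·b2 ≠ 0, where b2 = q(le). Then there exist positive constants γ3, β3, δ3, θ3 and δ such that for every classical solution (l, f) of the normalized closed-loop extrusion model on [0,∞) with f of class C³ on [0,∞)×[0,1], and every time t ≥ 0 at which |l(t) − le| + |N(t) − Ne| + |f(t,1) − fpe| ≤ δ, the quantity V3(t) := ∫₀¹ e^{−γ3·x}·(∂ₓ²f(t,x))² dx is differentiable and satisfies V3'(t) ≤ −β3·V3(t) − δ3·(∂ₓ²f(t,1))² + θ3·((l(t) − le)² + (f(t,1) − fpe)² + (∂ₓf(t,1))²). -/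
set_option maxHeartbeats 4000000

/-! ### Auxiliary partial-derivative machinery -/

noncomputable def pdt (g : ℝ × ℝ → ℝ) (p : ℝ × ℝ) : ℝ := fderiv ℝ g p (1, 0)
noncomputable def pdx (g : ℝ × ℝ → ℝ) (p : ℝ × ℝ) : ℝ := fderiv ℝ g p (0, 1)

lemma hasDerivAt_pdt {g : ℝ × ℝ → ℝ} {t x : ℝ} (hg : DifferentiableAt ℝ g (t, x)) :
    HasDerivAt (fun s => g (s, x)) (pdt g (t, x)) t := by
  have h1 : HasDerivAt (fun s : ℝ => (s, x)) ((1:ℝ), (0:ℝ)) t :=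
    (hasDerivAt_id t).prodMk (hasDerivAt_const t x)
  simpa [pdt, Function.comp_def] using hg.hasFDerivAt.comp_hasDerivAt t h1

lemma hasDerivAt_pdx {g : ℝ × ℝ → ℝ} {t x : ℝ} (hg : DifferentiableAt ℝ g (t, x)) :
    HasDerivAt (fun y => g (t, y)) (pdx g (t, x)) x := by
  have h1 : HasDerivAt (fun y : ℝ => (t, y)) ((0:ℝ), (1:ℝ)) x :=
    (hasDerivAt_const x t).prodMk (hasDerivAt_id x)
  simpa [pdx, Function.comp_def] using hg.hasFDerivAt.comp_hasDerivAt x h1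

lemma contDiff_pdt {g : ℝ × ℝ → ℝ} {n m : WithTop ℕ∞} (hg : ContDiff ℝ n g)
    (hm : m + 1 ≤ n) : ContDiff ℝ m (pdt g) :=
  (ContinuousLinearMap.apply ℝ ℝ ((1:ℝ), (0:ℝ))).contDiff.comp (hg.fderiv_right hm)

lemma contDiff_pdx {g : ℝ × ℝ → ℝ} {n m : WithTop ℕ∞} (hg : ContDiff ℝ n g)
    (hm : m + 1 ≤ n) : ContDiff ℝ m (pdx g) :=
  (ContinuousLinearMap.apply ℝ ℝ ((0:ℝ), (1:ℝ))).contDiff.comp (hg.fderiv_right hm)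

lemma pd_symm {g : ℝ × ℝ → ℝ} {n : WithTop ℕ∞} (hg : ContDiff ℝ n g) (h2 : 2 ≤ n)
    (p : ℝ × ℝ) : pdt (pdx g) p = pdx (pdt g) p := by
  set f' := fderiv ℝ g with hf'
  have hC1 : ContDiff ℝ 1 f' := hg.fderiv_right (le_trans (by norm_num) h2)
  have hd : DifferentiableAt ℝ f' p := (hC1.differentiable one_ne_zero) p
  have h2' : HasFDerivAt f' (fderiv ℝ f' p) p := hd.hasFDerivAt
  have sym := second_derivative_symmetric
    (fun y => ((hg.differentiable (lt_of_lt_of_le (by norm_num) h2).ne') y).hasFDerivAt) h2'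
  have ex : HasFDerivAt (fun q => f' q ((0:ℝ), (1:ℝ)))
      ((ContinuousLinearMap.apply ℝ ℝ ((0:ℝ), (1:ℝ))).comp (fderiv ℝ f' p)) p :=
    (ContinuousLinearMap.apply ℝ ℝ ((0:ℝ), (1:ℝ))).hasFDerivAt.comp p h2'
  have et : HasFDerivAt (fun q => f' q ((1:ℝ), (0:ℝ)))
      ((ContinuousLinearMap.apply ℝ ℝ ((1:ℝ), (0:ℝ))).comp (fderiv ℝ f' p)) p :=
    (ContinuousLinearMap.apply ℝ ℝ ((1:ℝ), (0:ℝ))).hasFDerivAt.comp p h2'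
  have e1 : pdt (pdx g) p = fderiv ℝ f' p ((1:ℝ), (0:ℝ)) ((0:ℝ), (1:ℝ)) := by
    have : fderiv ℝ (pdx g) p
        = (ContinuousLinearMap.apply ℝ ℝ ((0:ℝ), (1:ℝ))).comp (fderiv ℝ f' p) := ex.fderiv
    simp [pdt, pdx, this]
  have e2 : pdx (pdt g) p = fderiv ℝ f' p ((0:ℝ), (1:ℝ)) ((1:ℝ), (0:ℝ)) := by
    have : fderiv ℝ (pdt g) p
        = (ContinuousLinearMap.apply ℝ ℝ ((1:ℝ), (0:ℝ))).comp (fderiv ℝ f' p) := et.fderiv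
    simp [pdt, pdx, this]
  rw [e1, e2, sym]

lemma deriv_eq_zero_of_eqOn_zero {g : ℝ → ℝ} {s : Set ℝ} {x : ℝ}
    (hs : UniqueDiffWithinAt ℝ s x) (hx : x ∈ s) (hg : DifferentiableAt ℝ g x)
    (h0 : ∀ y ∈ s, g y = 0) : deriv g x = 0 := by
  have h1 : HasDerivWithinAt g (deriv g x) s x := hg.hasDerivAt.hasDerivWithinAt
  have h2 : HasDerivWithinAt (fun _ : ℝ => (0:ℝ)) (deriv g x) s x :=
    h1.congr (fun y hy => (h0 y hy).symm) (h0 x hx).symm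
  have h3 : HasDerivWithinAt (fun _ : ℝ => (0:ℝ)) 0 s x :=
    (hasDerivAt_const x (0:ℝ)).hasDerivWithinAt
  have := h2.derivWithin hs
  rw [h3.derivWithin hs] at this
  exact this.symm

lemma deriv_eq_deriv_of_eventuallyEq_Ici {u v : ℝ → ℝ} {t : ℝ} (ht : (0:ℝ) ≤ t)
    (hu : DifferentiableAt ℝ u t) (hv : DifferentiableAt ℝ v t)
    (h : u =ᶠ[nhdsWithin t (Set.Ici 0)] v) : deriv u t = deriv v t := by
  have hU : UniqueDiffWithinAt ℝ (Set.Ici (0:ℝ)) t := uniqueDiffOn_Ici 0 t ht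
  have h1 : HasDerivWithinAt u (deriv u t) (Set.Ici 0) t := hu.hasDerivAt.hasDerivWithinAt
  have h2 : HasDerivWithinAt v (deriv u t) (Set.Ici 0) t :=
    h1.congr_of_eventuallyEq h.symm (h.self_of_nhdsWithin (Set.mem_Ici.mpr ht)).symm
  have h3 : HasDerivWithinAt v (deriv v t) (Set.Ici 0) t := hv.hasDerivAt.hasDerivWithinAt
  rw [← h2.derivWithin hU, ← h3.derivWithin hU]

lemma quad_bound (Am K M a b s w : ℝ) (hAm : 0 < Am) (hK : 0 ≤ K) (hM : 0 ≤ M)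
    (ha : 0 ≤ a) (hb : 0 ≤ b) (hs : 0 ≤ s) (hw : w ^ 2 ≤ (K * (a + b) + M * s) ^ 2) :
    Am * w ^ 2 ≤ 4 * Am * (K ^ 2 + M ^ 2 + 1) * (a ^ 2 + b ^ 2 + s ^ 2) := by
  have h1 : (K * (a + b) + M * s) ^ 2 ≤ 4 * (K ^ 2 + M ^ 2 + 1) * (a ^ 2 + b ^ 2 + s ^ 2) := by
    nlinarith [sq_nonneg (K * a - K * b), sq_nonneg (K * a - M * s), sq_nonneg (K * b - M * s),
      sq_nonneg a, sq_nonneg b, sq_nonneg s, mul_nonneg ha hb, mul_nonneg hK hM,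
      sq_nonneg (K - M), sq_nonneg (a + b + s)]
  nlinarith [hw, h1, hAm.le]

/-- Lemma 3 of the paper: if `1 − k1·b2 ≠ 0` with `b2 = q(le)`, there are
positive constants `γ3, β3, δ3, θ3, δ` such that along every classical solution of the
closed-loop extrusion model with `f` of class `C³`, at each time `t ≥ 0` where the solution
is `δ`-close to the equilibrium, `V3(t) = ∫₀¹ e^{−γ3 x}(∂ₓ²f(t,x))² dx` is differentiable
with `V3'(t) ≤ −β3·V3(t) − δ3·(∂ₓ²f(t,1))²
+ θ3·((l(t) − le)² + (f(t,1) − fpe)² + (∂ₓf(t,1))²)`. -/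
theorem lyapunov_V3_decay
    (L B Kd ζ η ρ0 Seff Veff : ℝ)
    (hL : 0 < L) (hB : 0 < B) (hKd : 0 < Kd) (hζ : 0 < ζ) (hη : 0 < η)
    (hρ0 : 0 < ρ0) (hSeff : 0 < Seff) (hVeff : 0 < Veff)
    (le fpe Ne : ℝ)
    (hle : le ∈ Set.Ioo 0 L) (hfpe : fpe ∈ Set.Ioo (0:ℝ) 1) (hNe : 0 < Ne)
    (heq : (Kd / η) * Ne * qfun η ρ0 Veff L B Kd le = ρ0 * Veff * Ne * fpe)
    (k1 k2 : ℝ)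
    (hden : 1 - k1 * qfun η ρ0 Veff L B Kd le ≠ 0) :
    ∃ γ3 > (0:ℝ), ∃ β3 > (0:ℝ), ∃ δ3 > (0:ℝ), ∃ θ3 > (0:ℝ), ∃ δ > (0:ℝ),
      ∀ (l : ℝ → ℝ) (f : ℝ → ℝ → ℝ) (N Fi ΔP : ℝ → ℝ),
        -- regularity: l is C¹ and f is C³
        ContDiff ℝ 1 l →
        ContDiff ℝ 3 (Function.uncurry f) →
        -- state constraints
        (∀ t, 0 ≤ t → l t ∈ Set.Ioo 0 L) →
        (∀ t, 0 ≤ t → ∀ x ∈ Set.Icc (0:ℝ) 1, f t x < 1) →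
        -- die pressure difference and feedback controls
        (∀ t, 0 ≤ t → ΔP t = N t * qfun η ρ0 Veff L B Kd (l t)) →
        (∀ t, 0 ≤ t → N t = Ne + k1 * (ΔP t - Ne * qfun η ρ0 Veff L B Kd le)) →
        (∀ t, 0 ≤ t → 0 < N t) →
        (∀ t, 0 ≤ t →
          Fi t = ρ0 * Veff * Ne * fpe + k2 * (ΔP t - Ne * qfun η ρ0 Veff L B Kd le)) →
        -- interface dynamics
        (∀ t, 0 ≤ t → HasDerivAt l
          (((Kd / η) * ΔP t - ρ0 * Veff * N t * f t 1) / (ρ0 * Seff * (1 - f t 1))) t) →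
        -- transport equation with normalized speed α(t,x) = (ζ·N(t) − x·l'(t))/l(t)
        (∀ t, 0 ≤ t → ∀ x ∈ Set.Icc (0:ℝ) 1,
          deriv (fun s => f s x) t
            + ((ζ * N t - x * deriv l t) / l t) * deriv (f t) x = 0) →
        -- boundary condition
        (∀ t, 0 ≤ t → f t 0 = Fi t / (ρ0 * Veff * N t)) →
        ∀ t, 0 ≤ t →
          |l t - le| + |N t - Ne| + |f t 1 - fpe| ≤ δ →
          ∃ v : ℝ,
            HasDerivAt
              (fun s => ∫ x in (0:ℝ)..1,
                Real.exp (-γ3 * x) * (iteratedDeriv 2 (f s) x) ^ 2) v t ∧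
            v ≤ -β3 * (∫ x in (0:ℝ)..1, Real.exp (-γ3 * x) * (iteratedDeriv 2 (f t) x) ^ 2)
              - δ3 * (iteratedDeriv 2 (f t) 1) ^ 2
              + θ3 * ((l t - le) ^ 2 + (f t 1 - fpe) ^ 2 + (deriv (f t) 1) ^ 2) := by
  set q : ℝ → ℝ := qfun η ρ0 Veff L B Kd with hqdef
  obtain ⟨hle0, hleL⟩ := hle
  obtain ⟨hfpe0, hfpe1⟩ := hfpe
  -- smoothness of q on (0, L)
  have hq_sm : ∀ l' ∈ Set.Ioo 0 L, ContDiffAt ℝ 4 q l' := by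
    intro l' hl'
    have hd : B * ρ0 + Kd * (L - l') ≠ 0 := by nlinarith [hl'.1, hl'.2]
    have : q = fun l' => η * ρ0 * Veff * (L - l') / (B * ρ0 + Kd * (L - l')) := rfl
    rw [this]
    exact ((contDiffAt_const.mul (contDiffAt_const.sub contDiffAt_id))).div
      (contDiffAt_const.add (contDiffAt_const.mul (contDiffAt_const.sub contDiffAt_id))) hd
  have hcq : ContinuousAt (fun l' => 1 - k1 * q l') le :=
    continuousAt_const.sub (continuousAt_const.mul (hq_sm le ⟨hle0, hleL⟩).continuousAt)
  have hS : (Set.Ioo 0 L ∩ {l' | 1 - k1 * q l' ≠ 0}) ∈ nhds le := by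
    refine Filter.inter_mem (isOpen_Ioo.mem_nhds ⟨hle0, hleL⟩) ?_
    exact hcq.preimage_mem_nhds (isOpen_compl_singleton.mem_nhds hden)
  obtain ⟨r1, hr1pos, hball1⟩ := Metric.mem_nhds_iff.mp hS
  have hmem1 : ∀ l' ∈ Metric.ball le r1, l' ∈ Set.Ioo 0 L ∧ 1 - k1 * q l' ≠ 0 :=
    fun l' h => hball1 h
  set U : Set (ℝ × ℝ) := (Metric.ball le r1) ×ˢ (Metric.ball fpe (1 - fpe)) with hU
  have hUopen : IsOpen U := (Metric.isOpen_ball).prod (Metric.isOpen_ball)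
  set ze : ℝ × ℝ := (le, fpe) with hze
  have hzeU : ze ∈ U := by
    constructor <;> simp [Metric.mem_ball, hr1pos, sub_pos.mpr hfpe1, hze]
  have hUlt1 : ∀ z ∈ U, z.2 < 1 := by
    rintro z ⟨_, hz2⟩
    rw [Metric.mem_ball, Real.dist_eq] at hz2
    cases abs_lt.mp hz2 with
    | intro a b => linarith
  -- auxiliary functions
  set Nl : ℝ → ℝ := fun l' => Ne * (1 - k1 * q le) / (1 - k1 * q l') with hNl
  set hbcf : ℝ → ℝ :=
    fun l' => (ρ0 * Veff * Ne * fpe + k2 * (Nl l' * q l' - Ne * q le)) / (ρ0 * Veff * Nl l')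
    with hhbcf
  set dbc : ℝ → ℝ := fun l' => fderiv ℝ hbcf l' 1 with hdbc
  set Fd : ℝ × ℝ → ℝ := fun z =>
    ((Kd / η) * (Nl z.1 * q z.1) - ρ0 * Veff * Nl z.1 * z.2) / (ρ0 * Seff * (1 - z.2)) with hFd
  set G : ℝ × ℝ → ℝ := fun z => -(dbc z.1) * Fd z * z.1 / (ζ * Nl z.1) with hG
  have hNl_ne : ∀ l' ∈ Metric.ball le r1, Nl l' ≠ 0 := by
    intro l' h
    exact div_ne_zero (mul_ne_zero (ne_of_gt hNe) hden) (hmem1 l' h).2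
  have hNl_le : Nl le = Ne := by rw [hNl]; field_simp
  have hNl_sm : ∀ l' ∈ Metric.ball le r1, ContDiffAt ℝ 4 Nl l' := by
    intro l' h
    exact contDiffAt_const.div (contDiffAt_const.sub
      (contDiffAt_const.mul (hq_sm l' (hmem1 l' h).1))) (hmem1 l' h).2
  have hbc_sm : ∀ l' ∈ Metric.ball le r1, ContDiffAt ℝ 4 hbcf l' := by
    intro l' h
    have hd : ρ0 * Veff * Nl l' ≠ 0 :=
      mul_ne_zero (mul_ne_zero (ne_of_gt hρ0) (ne_of_gt hVeff)) (hNl_ne l' h)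
    exact (contDiffAt_const.add (contDiffAt_const.mul
      (((hNl_sm l' h).mul (hq_sm l' (hmem1 l' h).1)).sub contDiffAt_const))).div
      (contDiffAt_const.mul (hNl_sm l' h)) hd
  have hdbc_sm : ∀ l' ∈ Metric.ball le r1, ContDiffAt ℝ 3 dbc l' := by
    intro l' h
    exact ((hbc_sm l' h).fderiv_right (by norm_num)).clm_apply contDiffAt_const
  have hFd_sm : ∀ z ∈ U, ContDiffAt ℝ 3 Fd z := by
    rintro z ⟨hz1, hz2⟩
    have hd : ρ0 * Seff * (1 - z.2) ≠ 0 := by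
      have := hUlt1 z ⟨hz1, hz2⟩
      have h1 : (1:ℝ) - z.2 ≠ 0 := by linarith
      exact mul_ne_zero (mul_ne_zero (ne_of_gt hρ0) (ne_of_gt hSeff)) h1
    have hNlz : ContDiffAt ℝ 3 (fun z : ℝ × ℝ => Nl z.1) z :=
      (((hNl_sm z.1 hz1).of_le (by norm_num)).comp z contDiffAt_fst)
    have hqz : ContDiffAt ℝ 3 (fun z : ℝ × ℝ => q z.1) z :=
      (((hq_sm z.1 (hmem1 z.1 hz1).1).of_le (by norm_num)).comp z contDiffAt_fst)
    exact ((contDiffAt_const.mul (hNlz.mul hqz)).sub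
      ((contDiffAt_const.mul hNlz).mul contDiffAt_snd)).div
      (contDiffAt_const.mul (contDiffAt_const.sub contDiffAt_snd)) hd
  have hG_sm : ∀ z ∈ U, ContDiffAt ℝ 2 G z := by
    rintro z ⟨hz1, hz2⟩
    have hd : ζ * Nl z.1 ≠ 0 := mul_ne_zero (ne_of_gt hζ) (hNl_ne z.1 hz1)
    have hdbcz : ContDiffAt ℝ 2 (fun z : ℝ × ℝ => dbc z.1) z :=
      (((hdbc_sm z.1 hz1).of_le (by norm_num)).comp z contDiffAt_fst)
    have hNlz : ContDiffAt ℝ 2 (fun z : ℝ × ℝ => Nl z.1) z :=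
      (((hNl_sm z.1 hz1).of_le (by norm_num)).comp z contDiffAt_fst)
    exact (((hdbcz.neg.mul ((hFd_sm z ⟨hz1, hz2⟩).of_le (by norm_num))).mul
      contDiffAt_fst)).div (contDiffAt_const.mul hNlz) hd
  -- equilibrium values
  have hFd_ze : Fd ze = 0 := by
    rw [hFd]
    have : (Kd / η) * (Nl le * q le) - ρ0 * Veff * Nl le * fpe = 0 := by
      rw [hNl_le]; linear_combination heq
    simp only [hze]
    rw [this, zero_div]
  have hG_ze : G ze = 0 := by rw [hG]; simp only [hFd_ze, mul_zero, zero_mul, zero_div]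
  -- W0 and W1
  set W0 : ℝ × ℝ → ℝ := fun z =>
    -((fderiv ℝ G z) (Fd z, 0) + (-(Fd z) / z.1) * G z) / (ζ * Nl z.1 / z.1) with hW0
  set W1 : ℝ × ℝ → ℝ := fun z =>
    -((fderiv ℝ G z) (0, -((ζ * Nl z.1 - Fd z) / z.1))) / (ζ * Nl z.1 / z.1) with hW1
  have hle_ball : le ∈ Metric.ball le r1 := Metric.mem_ball_self hr1pos
  have hα0_ne : ζ * Nl (ze.1) / ze.1 ≠ 0 := by
    simp only [hze, hNl_le]
    positivity
  have hGd : ContDiffAt ℝ 1 (fderiv ℝ G) ze :=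
    ContDiffAt.fderiv_right (hG_sm ze hzeU) (by norm_num)
  have hNlz1 : ContDiffAt ℝ 1 (fun z : ℝ × ℝ => Nl z.1) ze :=
    ((hNl_sm ze.1 hle_ball).of_le (by norm_num)).comp ze contDiffAt_fst
  have hFdz1 : ContDiffAt ℝ 1 Fd ze := (hFd_sm ze hzeU).of_le (by norm_num)
  have hGz1 : ContDiffAt ℝ 1 G ze := (hG_sm ze hzeU).of_le (by norm_num)
  have hfst_ne : (ze : ℝ × ℝ).1 ≠ 0 := ne_of_gt hle0
  have hW0_sm : ContDiffAt ℝ 1 W0 ze := by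
    refine ContDiffAt.div ?_ ((contDiffAt_const.mul hNlz1).div contDiffAt_fst hfst_ne) hα0_ne
    refine ContDiffAt.neg ?_
    refine ContDiffAt.add (hGd.clm_apply (hFdz1.prodMk contDiffAt_const)) ?_
    exact (ContDiffAt.div hFdz1.neg contDiffAt_fst hfst_ne).mul hGz1
  have hW1_sm : ContDiffAt ℝ 1 W1 ze := by
    refine ContDiffAt.div ?_ ((contDiffAt_const.mul hNlz1).div contDiffAt_fst hfst_ne) hα0_ne
    refine ContDiffAt.neg ?_
    refine hGd.clm_apply (contDiffAt_const.prodMk ?_)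
    exact (ContDiffAt.div ((contDiffAt_const.mul hNlz1).sub hFdz1) contDiffAt_fst hfst_ne).neg
  have hW0_ze : W0 ze = 0 := by
    have h00 : ((Fd ze, (0:ℝ)) : ℝ × ℝ) = 0 := by rw [hFd_ze]; rfl
    rw [hW0]
    simp only [h00, map_zero, hFd_ze, hG_ze, mul_zero, neg_zero, zero_div, add_zero, zero_mul]
    simp
    exact Or.inl (map_zero (fderiv ℝ G ze))
  obtain ⟨K, sW, hsWnhds, hlip⟩ := hW0_sm.exists_lipschitzOnWith
  set MW1 : ℝ := |W1 ze| + 1 with hMW1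
  have hMW1pos : 0 < MW1 := by positivity
  have hW1ev : ∀ᶠ z in nhds ze, |W1 z| ≤ MW1 := by
    have h1 : ∀ᶠ z in nhds ze, W1 z ∈ Metric.ball (W1 ze) 1 :=
      hW1_sm.continuousAt (Metric.ball_mem_nhds _ one_pos)
    filter_upwards [h1] with z hz
    rw [Metric.mem_ball, Real.dist_eq] at hz
    cases abs_lt.mp hz with
    | intro a b =>
      rw [hMW1, abs_le]
      constructor <;> nlinarith [le_abs_self (W1 ze), neg_abs_le (W1 ze)]
  set ε₀ : ℝ := ζ * Ne / 96 with hε₀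
  have hε₀pos : 0 < ε₀ := by positivity
  have hFdev : ∀ᶠ z in nhds ze, |Fd z| ≤ ε₀ := by
    have h1 : ∀ᶠ z in nhds ze, Fd z ∈ Metric.ball (Fd ze) ε₀ :=
      hFdz1.continuousAt (Metric.ball_mem_nhds _ hε₀pos)
    filter_upwards [h1] with z hz
    rw [Metric.mem_ball, Real.dist_eq, hFd_ze, sub_zero] at hz
    exact le_of_lt hz
  have hbig : (U ∩ sW ∩ {z | |W1 z| ≤ MW1} ∩ {z | |Fd z| ≤ ε₀}) ∈ nhds ze :=
    Filter.inter_mem (Filter.inter_mem (Filter.inter_mem (hUopen.mem_nhds hzeU)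
      hsWnhds) hW1ev) hFdev
  obtain ⟨rδ, hrδpos, hballbig⟩ := Metric.mem_nhds_iff.mp hbig
  -- the constants
  set c : ℝ := ζ * Ne / (8 * le) with hc
  have hcpos : 0 < c := by positivity
  set Amax : ℝ := 4 * ζ * Ne / le with hAmax
  have hAmaxpos : 0 < Amax := by positivity
  set β3 : ℝ := c / 2 with hβ3
  set δ3 : ℝ := c * Real.exp (-1) with hδ3
  set θ3 : ℝ := 4 * Amax * ((K : ℝ) ^ 2 + MW1 ^ 2 + 1) with hθ3
  set δ : ℝ := min (rδ / 2) (min (le / 2) (Ne / 2)) with hδ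
  have hδpos : 0 < δ := by
    refine lt_min (by positivity) (lt_min (by positivity) (by positivity))
  refine ⟨1, one_pos, β3, by positivity, δ3, by positivity, θ3, ?_, δ, hδpos, ?_⟩
  · have hK2 : (0:ℝ) ≤ (K : ℝ) ^ 2 := sq_nonneg _
    have hM2 : (0:ℝ) ≤ MW1 ^ 2 := sq_nonneg _
    rw [hθ3]; nlinarith
  intro l f N Fi ΔP hlC1 hfC3 hlIoo hflt1 hΔPdef hNdef hNpos hFidef hl' hPDE hbcond t ht hclose
  set F : ℝ × ℝ → ℝ := Function.uncurry f with hFdef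
  have hF3 : ContDiff ℝ 3 F := hfC3
  have hF1 : Differentiable ℝ F := hF3.differentiable (by norm_num)
  have hFx2 : ContDiff ℝ 2 (pdx F) := contDiff_pdx hF3 (by norm_num)
  have hFt2 : ContDiff ℝ 2 (pdt F) := contDiff_pdt hF3 (by norm_num)
  have hFxx1 : ContDiff ℝ 1 (pdx (pdx F)) := contDiff_pdx hFx2 (by norm_num)
  have hFtx1 : ContDiff ℝ 1 (pdt (pdx F)) := contDiff_pdt hFx2 (by norm_num)
  have hwtc : Continuous (pdt (pdx (pdx F))) :=
    (contDiff_pdt hFxx1 (by norm_num) : ContDiff ℝ 0 _).continuous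
  have hwxc : Continuous (pdx (pdx (pdx F))) :=
    (contDiff_pdx hFxx1 (by norm_num) : ContDiff ℝ 0 _).continuous
  have hwc : Continuous (pdx (pdx F)) := hFxx1.continuous
  -- translations of derivatives
  have hderiv_fx : ∀ s x, deriv (f s) x = pdx F (s, x) :=
    fun s x => (hasDerivAt_pdx (hF1 _)).deriv
  have hderiv_ft : ∀ (s x : ℝ), deriv (fun σ => f σ x) s = pdt F (s, x) :=
    fun s x => (hasDerivAt_pdt (hF1 _)).deriv
  have hiter : ∀ s x, iteratedDeriv 2 (f s) x = pdx (pdx F) (s, x) := by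
    intro s x
    have h2 : iteratedDeriv 2 (f s) = deriv (deriv (f s)) := by
      rw [iteratedDeriv_succ, iteratedDeriv_one]
    rw [h2]
    have hd : deriv (f s) = fun y => pdx F (s, y) := funext fun y => hderiv_fx s y
    rw [hd]
    exact (hasDerivAt_pdx ((hFx2.differentiable (by norm_num)) _)).deriv
  have hPDE' : ∀ s, 0 ≤ s → ∀ x ∈ Set.Icc (0:ℝ) 1,
      pdt F (s, x) + ((ζ * N s - x * deriv l s) / l s) * pdx F (s, x) = 0 := by
    intro s hs x hx
    have h := hPDE s hs x hx
    rwa [hderiv_ft s x, hderiv_fx s x] at h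
  -- closeness facts
  have h1abs := abs_nonneg (l t - le)
  have h2abs := abs_nonneg (N t - Ne)
  have h3abs := abs_nonneg (f t 1 - fpe)
  have habl : |l t - le| ≤ δ := by linarith
  have habN : |N t - Ne| ≤ δ := by linarith
  have habp : |f t 1 - fpe| ≤ δ := by linarith
  have hδrδ : δ ≤ rδ / 2 := min_le_left _ _
  have hδle : δ ≤ le / 2 := le_trans (min_le_right _ _) (min_le_left _ _)
  have hδNe : δ ≤ Ne / 2 := le_trans (min_le_right _ _) (min_le_right _ _)
  -- the relatively open set J of good times
  set φz : ℝ → ℝ × ℝ := fun s => (l s, f s 1) with hφz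
  have hφcont : Continuous φz :=
    (hlC1.continuous).prodMk (hF3.continuous.comp (continuous_id.prodMk continuous_const))
  set O : Set ℝ := φz ⁻¹' (Metric.ball ze rδ) with hO
  have hOopen : IsOpen O := hφcont.isOpen_preimage _ Metric.isOpen_ball
  set J : Set ℝ := O ∩ Set.Ici 0 with hJ
  have htJ : t ∈ J := by
    constructor
    · show φz t ∈ Metric.ball ze rδ
      rw [Metric.mem_ball]
      have hde : dist (φz t) ze = max (dist (l t) le) (dist (f t 1) fpe) := Prod.dist_eq
      rw [hde, Real.dist_eq, Real.dist_eq]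
      exact max_lt (by linarith) (by linarith)
    · exact ht
  have hJmem : ∀ s ∈ J, φz s ∈ U ∩ sW ∩ {z | |W1 z| ≤ MW1} ∩ {z | |Fd z| ≤ ε₀} :=
    fun s hs => hballbig hs.1
  have hJU : ∀ s ∈ J, φz s ∈ U := fun s hs => (((hJmem s hs).1).1).1
  have hJball1 : ∀ s ∈ J, l s ∈ Metric.ball le r1 := fun s hs => ((hJU s hs).1 : _)
  have hJnhds : ∀ s ∈ J, J ∈ nhdsWithin s (Set.Ici 0) := by
    intro s hs
    exact Filter.inter_mem (mem_nhdsWithin_of_mem_nhds (hOopen.mem_nhds hs.1))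
      self_mem_nhdsWithin
  -- the closed-loop identities along the solution
  have hNid : ∀ s ∈ J, N s = Nl (l s) := by
    intro s hs
    have hs0 : (0:ℝ) ≤ s := hs.2
    have h2 : 1 - k1 * q (l s) ≠ 0 := (hmem1 _ (hJball1 s hs)).2
    have h1 : N s * (1 - k1 * q (l s)) = Ne * (1 - k1 * q le) := by
      have ha := hNdef s hs0
      have hb := hΔPdef s hs0
      rw [hb] at ha
      linear_combination ha
    simp only [hNl]
    rw [eq_div_iff h2]
    linear_combination h1
  have hbcid : ∀ s ∈ J, f s 0 = hbcf (l s) := by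
    intro s hs
    have hs0 : (0:ℝ) ≤ s := hs.2
    have hNs := hNid s hs
    rw [hbcond s hs0, hFidef s hs0, hΔPdef s hs0]
    simp only [hhbcf]
    rw [hNs]
  have hderivlid : ∀ s ∈ J, deriv l s = Fd (φz s) := by
    intro s hs
    have hs0 : (0:ℝ) ≤ s := hs.2
    have h := (hl' s hs0).deriv
    rw [hΔPdef s hs0, hNid s hs] at h
    rw [h]
  have hdbc_eq : ∀ l', dbc l' = deriv hbcf l' := by
    intro l'
    simp only [hdbc]
    exact fderiv_apply_one_eq_deriv
  -- the boundary gradient identity on J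
  have hGid : ∀ s ∈ J, pdx F (s, 0) = G (φz s) := by
    intro s hs
    have hs0 : (0:ℝ) ≤ s := hs.2
    have hlb := hJball1 s hs
    have hls0 : l s ≠ 0 := ne_of_gt (hlIoo s hs0).1
    have hNs0 : ζ * N s ≠ 0 := mul_ne_zero (ne_of_gt hζ) (ne_of_gt (hNpos s hs0))
    have hbcd : DifferentiableAt ℝ hbcf (l s) := ((hbc_sm _ hlb).differentiableAt (by norm_num))
    have hld : HasDerivAt l (deriv l s) s := ((hlC1.differentiable one_ne_zero) s).hasDerivAt
    have hcomp : HasDerivAt (fun σ => hbcf (l σ)) (deriv hbcf (l s) * deriv l s) s :=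
      (hbcd.hasDerivAt).comp s hld
    have hev : (fun σ => f σ 0) =ᶠ[nhdsWithin s (Set.Ici 0)] (fun σ => hbcf (l σ)) := by
      filter_upwards [hJnhds s hs] with σ hσ
      exact hbcid σ hσ
    have heq0 : deriv (fun σ => f σ 0) s = deriv (fun σ => hbcf (l σ)) s :=
      deriv_eq_deriv_of_eventuallyEq_Ici hs0 (hasDerivAt_pdt (hF1 _)).differentiableAt
        hcomp.differentiableAt hev
    have hft0 : pdt F (s, 0) = deriv hbcf (l s) * deriv l s := by
      rw [← hderiv_ft s 0, heq0, hcomp.deriv]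
    have hpde0 := hPDE' s hs0 0 (by constructor <;> norm_num)
    rw [show ((ζ * N s - 0 * deriv l s) / l s) = ζ * N s / l s by ring] at hpde0
    have hsolve : pdx F (s, 0) = -(deriv hbcf (l s) * deriv l s) * l s / (ζ * N s) := by
      rw [← hft0, eq_div_iff hNs0]
      field_simp at hpde0
      linear_combination hpde0
    rw [hsolve, hderivlid s hs, hNid s hs]
    simp only [hG, hφz]
    rw [hdbc_eq]
    have hNlne : Nl (l s) ≠ 0 := hNl_ne _ hlb
    field_simp
  -- time derivative of the boundary gradient identity, at time t
  have hU_t : φz t ∈ U := hJU t htJ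
  have hGC1t : ContDiffAt ℝ 1 G (φz t) := (hG_sm _ hU_t).of_le (by norm_num)
  have hinner : HasDerivAt φz (deriv l t, pdt F (t, 1)) t :=
    (((hlC1.differentiable one_ne_zero) t).hasDerivAt).prodMk (hasDerivAt_pdt (hF1 _))
  have houter : HasFDerivAt G (fderiv ℝ G (φz t)) (φz t) :=
    (hGC1t.differentiableAt one_ne_zero).hasFDerivAt
  have hcompG : HasDerivAt (fun s => G (φz s))
      ((fderiv ℝ G (φz t)) (deriv l t, pdt F (t, 1))) t := by
    simpa [Function.comp_def] using houter.comp_hasDerivAt t hinner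
  have hevG : (fun s => pdx F (s, 0)) =ᶠ[nhdsWithin t (Set.Ici 0)] (fun s => G (φz s)) := by
    filter_upwards [hJnhds t htJ] with σ hσ
    exact hGid σ hσ
  have hpdxdiff : DifferentiableAt ℝ (fun s : ℝ => pdx F (s, 0)) t :=
    (hasDerivAt_pdt ((hFx2.differentiable (by norm_num)) _)).differentiableAt
  have heqd : pdt (pdx F) (t, 0) = (fderiv ℝ G (φz t)) (deriv l t, pdt F (t, 1)) := by
    rw [← (hasDerivAt_pdt ((hFx2.differentiable (by norm_num)) ((t:ℝ), (0:ℝ)))).deriv,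
      ← hcompG.deriv]
    exact deriv_eq_deriv_of_eventuallyEq_Ici ht hpdxdiff hcompG.differentiableAt hevG
  -- first and second x-differentiations of the PDE at time t
  have hlin : ∀ y : ℝ, HasDerivAt (fun y' : ℝ => (ζ * N t - y' * deriv l t) / l t)
      (-(deriv l t) / l t) y := by
    intro y
    have h1 : HasDerivAt (fun y' : ℝ => ζ * N t - y' * deriv l t) (-(1 * deriv l t)) y :=
      ((hasDerivAt_id y).mul_const (deriv l t)).const_sub (ζ * N t)
    have h2 := h1.div_const (l t)
    simpa using h2
  have hE1 : ∀ x ∈ Set.Icc (0:ℝ) 1,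
      pdt (pdx F) (t, x) + ((-(deriv l t) / l t) * pdx F (t, x)
        + ((ζ * N t - x * deriv l t) / l t) * pdx (pdx F) (t, x)) = 0 := by
    intro x hx
    have hg1d : ∀ y : ℝ, HasDerivAt
        (fun y' => pdt F (t, y') + ((ζ * N t - y' * deriv l t) / l t) * pdx F (t, y'))
        (pdx (pdt F) (t, y) + ((-(deriv l t) / l t) * pdx F (t, y)
          + ((ζ * N t - y * deriv l t) / l t) * pdx (pdx F) (t, y))) y := by
      intro y
      exact (hasDerivAt_pdx ((hFt2.differentiable (by norm_num)) _)).add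
        ((hlin y).mul (hasDerivAt_pdx ((hFx2.differentiable (by norm_num)) _)))
    have hzero : ∀ y ∈ Set.Icc (0:ℝ) 1,
        (fun y' => pdt F (t, y') + ((ζ * N t - y' * deriv l t) / l t) * pdx F (t, y')) y = 0 :=
      fun y hy => hPDE' t ht y hy
    have hd0 := deriv_eq_zero_of_eqOn_zero ((uniqueDiffOn_Icc one_pos) x hx) hx
      (hg1d x).differentiableAt hzero
    rw [(hg1d x).deriv] at hd0
    rw [← pd_symm hF3 (by norm_num) ((t:ℝ), x)] at hd0
    exact hd0
  have hE2 : ∀ x ∈ Set.Icc (0:ℝ) 1,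
      pdt (pdx (pdx F)) (t, x)
        = 2 * (deriv l t / l t) * pdx (pdx F) (t, x)
          - ((ζ * N t - x * deriv l t) / l t) * pdx (pdx (pdx F)) (t, x) := by
    intro x hx
    have hg2d : ∀ y : ℝ, HasDerivAt
        (fun y' => pdt (pdx F) (t, y') + ((-(deriv l t) / l t) * pdx F (t, y')
          + ((ζ * N t - y' * deriv l t) / l t) * pdx (pdx F) (t, y')))
        (pdx (pdt (pdx F)) (t, y) + ((-(deriv l t) / l t) * pdx (pdx F) (t, y)
          + ((-(deriv l t) / l t) * pdx (pdx F) (t, y)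
            + ((ζ * N t - y * deriv l t) / l t) * pdx (pdx (pdx F)) (t, y)))) y := by
      intro y
      exact (hasDerivAt_pdx ((hFtx1.differentiable one_ne_zero) _)).add
        (((hasDerivAt_pdx ((hFx2.differentiable (by norm_num)) _)).const_mul
            (-(deriv l t) / l t)).add
          ((hlin y).mul (hasDerivAt_pdx ((hFxx1.differentiable one_ne_zero) _))))
    have hzero : ∀ y ∈ Set.Icc (0:ℝ) 1,
        (fun y' => pdt (pdx F) (t, y') + ((-(deriv l t) / l t) * pdx F (t, y')
          + ((ζ * N t - y' * deriv l t) / l t) * pdx (pdx F) (t, y'))) y = 0 :=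
      fun y hy => hE1 y hy
    have hd0 := deriv_eq_zero_of_eqOn_zero ((uniqueDiffOn_Icc one_pos) x hx) hx
      (hg2d x).differentiableAt hzero
    rw [(hg2d x).deriv] at hd0
    rw [← pd_symm hFx2 le_rfl ((t:ℝ), x)] at hd0
    linear_combination hd0
  -- solve for the boundary value of the second derivative
  have hlt0 : (0:ℝ) < l t := (hlIoo t ht).1
  have hNt0 : (0:ℝ) < N t := hNpos t ht
  have hNlt : N t = Nl (l t) := hNid t htJ
  have hdFt : deriv l t = Fd (φz t) := hderivlid t htJ
  have hNllt_ne : Nl (l t) ≠ 0 := hNl_ne _ (hJball1 t htJ)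
  have hpdtF1 : pdt F (t, 1)
      = -(((ζ * Nl (l t) - Fd (φz t)) / l t) * pdx F (t, 1)) := by
    have h := hPDE' t ht 1 ⟨by norm_num, le_refl 1⟩
    rw [hNlt, hdFt, one_mul] at h
    linarith
  have hw0 : pdx (pdx F) (t, 0) = W0 (φz t) + W1 (φz t) * pdx F (t, 1) := by
    have he := hE1 0 ⟨le_refl 0, by norm_num⟩
    rw [heqd] at he
    rw [hpdtF1, hGid t htJ, hdFt, hNlt] at he
    have hsplit2 : ((Fd (φz t), -(((ζ * Nl (l t) - Fd (φz t)) / l t) * pdx F (t, 1))) : ℝ × ℝ)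
        = (Fd (φz t), 0) + pdx F (t, 1) • (((0:ℝ), -((ζ * Nl (l t) - Fd (φz t)) / l t)) : ℝ × ℝ) := by
      simp [Prod.ext_iff]
      ring
    rw [hsplit2, map_add, map_smul, smul_eq_mul] at he
    simp only [hW0, hW1]
    have hα0lt : ζ * Nl (l t) / l t ≠ 0 :=
      div_ne_zero (mul_ne_zero (ne_of_gt hζ) hNllt_ne) (ne_of_gt hlt0)
    have hz1 : (φz t).1 = l t := rfl
    simp only [hz1]
    have hw : pdx (pdx F) (t, 0) = -((fderiv ℝ G (φz t)) (Fd (φz t), 0)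
        + (-(Fd (φz t)) / l t) * G (φz t)
        + pdx F (t, 1) * (fderiv ℝ G (φz t)) ((0:ℝ), -((ζ * Nl (l t) - Fd (φz t)) / l t)))
        / (ζ * Nl (l t) / l t) := by
      rw [eq_div_iff hα0lt]
      linear_combination he
    rw [hw]
    ring
  -- quantitative bounds at time t
  have hlt_lo : le / 2 ≤ l t := by
    have := abs_le.mp habl
    linarith [this.1]
  have hlt_hi : l t ≤ 3 * le / 2 := by
    have := abs_le.mp habl
    linarith [this.2]
  have hNt_lo : Ne / 2 ≤ N t := by
    have := abs_le.mp habN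
    linarith [this.1]
  have hNt_hi : N t ≤ 3 * Ne / 2 := by
    have := abs_le.mp habN
    linarith [this.2]
  have hFdabs : |deriv l t| ≤ ε₀ := by
    rw [hdFt]
    exact (hJmem t htJ).2
  have hdlo : -ε₀ ≤ deriv l t := (abs_le.mp hFdabs).1
  have hdhi : deriv l t ≤ ε₀ := (abs_le.mp hFdabs).2
  have hζNe : (0:ℝ) < ζ * Ne := by positivity
  have hcle : c * le = ζ * Ne / 8 := by rw [hc]; field_simp
  have hAle : Amax * le = 4 * (ζ * Ne) := by rw [hAmax]; field_simp
  have hxdbound : ∀ x ∈ Set.Icc (0:ℝ) 1, -ε₀ ≤ x * deriv l t ∧ x * deriv l t ≤ ε₀ := by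
    intro x hx
    have h1 : x * deriv l t ≤ x * ε₀ := mul_le_mul_of_nonneg_left hdhi hx.1
    have h2 : x * (-ε₀) ≤ x * deriv l t := mul_le_mul_of_nonneg_left hdlo hx.1
    have h3 : x * ε₀ ≤ 1 * ε₀ := mul_le_mul_of_nonneg_right hx.2 hε₀pos.le
    constructor
    · linarith only [h2, h3]
    · linarith only [h1, h3]
  have hαlo : ∀ x ∈ Set.Icc (0:ℝ) 1, c ≤ (ζ * N t - x * deriv l t) / l t := by
    intro x hx
    rw [le_div_iff₀ hlt0]
    have h1 := (hxdbound x hx).2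
    rw [hε₀] at h1
    have h2 : c * l t ≤ c * (3 * le / 2) := mul_le_mul_of_nonneg_left hlt_hi hcpos.le
    have h3 : ζ * (Ne / 2) ≤ ζ * N t := mul_le_mul_of_nonneg_left hNt_lo hζ.le
    linarith only [h1, h2, h3, hcle, hζNe]
  have hαhi : ∀ x ∈ Set.Icc (0:ℝ) 1, (ζ * N t - x * deriv l t) / l t ≤ Amax := by
    intro x hx
    rw [div_le_iff₀ hlt0]
    have h1 := (hxdbound x hx).1
    rw [hε₀] at h1
    have h2 : Amax * (le / 2) ≤ Amax * l t := mul_le_mul_of_nonneg_left hlt_lo hAmaxpos.le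
    have h3 : ζ * N t ≤ ζ * (3 * Ne / 2) := mul_le_mul_of_nonneg_left hNt_hi hζ.le
    linarith only [h1, h2, h3, hAle, hζNe]
  have hβpos : 0 < β3 := by rw [hβ3]; positivity
  have hpoint : ∀ x ∈ Set.Icc (0:ℝ) 1,
      3 * (deriv l t / l t) - (ζ * N t - x * deriv l t) / l t ≤ -β3 := by
    intro x hx
    have hrw : 3 * (deriv l t / l t) - (ζ * N t - x * deriv l t) / l t
        = (3 * deriv l t - (ζ * N t - x * deriv l t)) / l t := by ring
    rw [hrw, div_le_iff₀ hlt0]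
    have h1 := (hxdbound x hx).2
    have h4 := hdhi
    rw [hε₀] at h1 h4
    have h3 : ζ * (Ne / 2) ≤ ζ * N t := mul_le_mul_of_nonneg_left hNt_lo hζ.le
    have h2 : β3 * l t ≤ β3 * (3 * le / 2) := mul_le_mul_of_nonneg_left hlt_hi hβpos.le
    rw [hβ3] at h2 ⊢
    linarith only [h1, h2, h3, h4, hcle, hζNe]
  -- bound on the boundary second derivative
  have hsWt : φz t ∈ sW := ((hJmem t htJ).1).1.2
  have hzesW : ze ∈ sW := mem_of_mem_nhds hsWnhds
  have hW0b : |W0 (φz t)| ≤ (K : ℝ) * (|l t - le| + |f t 1 - fpe|) := by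
    have h1 := LipschitzOnWith.dist_le_mul hlip _ hsWt _ hzesW
    rw [Real.dist_eq, hW0_ze, sub_zero] at h1
    refine le_trans h1 ?_
    refine mul_le_mul_of_nonneg_left ?_ K.coe_nonneg
    rw [Prod.dist_eq]
    have he1 : dist (φz t).1 ze.1 = |l t - le| := by rw [Real.dist_eq]
    have he2 : dist (φz t).2 ze.2 = |f t 1 - fpe| := by rw [Real.dist_eq]
    rw [he1, he2]
    exact max_le (by linarith) (by linarith)
  have hW1b : |W1 (φz t)| ≤ MW1 := ((hJmem t htJ).1).2
  have hw0abs : |pdx (pdx F) (t, 0)|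
      ≤ (K : ℝ) * (|l t - le| + |f t 1 - fpe|) + MW1 * |pdx F (t, 1)| := by
    rw [hw0]
    refine le_trans (abs_add_le _ _) ?_
    rw [abs_mul]
    exact add_le_add hW0b (mul_le_mul_of_nonneg_right hW1b (abs_nonneg _))
  -- differentiation under the integral sign
  have hexpc : Continuous (fun x : ℝ => Real.exp (-1 * x)) :=
    Real.continuous_exp.comp (continuous_const.mul continuous_id)
  have hwcont : Continuous (fun x : ℝ => pdx (pdx F) (t, x)) :=
    hwc.comp (continuous_const.prodMk continuous_id)
  have hwxcont : Continuous (fun x : ℝ => pdx (pdx (pdx F)) (t, x)) :=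
    hwxc.comp (continuous_const.prodMk continuous_id)
  have hwtcont : Continuous (fun x : ℝ => pdt (pdx (pdx F)) (t, x)) :=
    hwtc.comp (continuous_const.prodMk continuous_id)
  have hIcont : ∀ s : ℝ, Continuous (fun x => Real.exp (-1 * x) * (pdx (pdx F) (s, x)) ^ 2) := by
    intro s
    exact hexpc.mul ((hwc.comp (continuous_const.prodMk continuous_id)).pow 2)
  have hI'tcont : Continuous
      (fun x => Real.exp (-1 * x) * (2 * pdx (pdx F) (t, x) * pdt (pdx (pdx F)) (t, x))) :=
    hexpc.mul ((continuous_const.mul hwcont).mul hwtcont)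
  have hI'contu : Continuous (fun p : ℝ × ℝ =>
      Real.exp (-1 * p.2) * (2 * pdx (pdx F) p * pdt (pdx (pdx F)) p)) :=
    (Real.continuous_exp.comp (continuous_const.mul continuous_snd)).mul
      ((continuous_const.mul hwc).mul hwtc)
  obtain ⟨C, hC⟩ := (((isCompact_Icc (a := t - 1) (b := t + 1)).prod
    (isCompact_Icc (a := (0:ℝ)) (b := 1)))).exists_bound_of_continuousOn hI'contu.continuousOn
  have hkey := intervalIntegral.hasDerivAt_integral_of_dominated_loc_of_deriv_le
    (μ := MeasureTheory.volume) (𝕜 := ℝ)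
    (F := fun s x => Real.exp (-1 * x) * (pdx (pdx F) (s, x)) ^ 2)
    (F' := fun s x => Real.exp (-1 * x) * (2 * pdx (pdx F) (s, x) * pdt (pdx (pdx F)) (s, x)))
    (x₀ := t) (a := 0) (b := 1) (bound := fun _ => C) (s := Metric.ball t 1) (Metric.ball_mem_nhds t one_pos)
    (Filter.Eventually.of_forall fun s => ((hIcont s).aestronglyMeasurable))
    ((hIcont t).intervalIntegrable 0 1)
    (hI'tcont.aestronglyMeasurable)
    (Filter.Eventually.of_forall (fun x hx s hs => by
      have hx' : x ∈ Set.Icc (0:ℝ) 1 := by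
        rw [Set.uIoc_of_le (by norm_num : (0:ℝ) ≤ 1)] at hx
        exact ⟨le_of_lt hx.1, hx.2⟩
      have hs' : s ∈ Set.Icc (t - 1) (t + 1) := by
        rw [Metric.mem_ball, Real.dist_eq] at hs
        have h := abs_lt.mp hs
        exact ⟨by linarith [h.1], by linarith [h.2]⟩
      exact hC (s, x) ⟨hs', hx'⟩))
    (intervalIntegrable_const)
    (Filter.Eventually.of_forall (fun x _ s _ => by
      have h1 : HasDerivAt (fun σ => pdx (pdx F) (σ, x)) (pdt (pdx (pdx F)) (s, x)) s :=
        hasDerivAt_pdt ((hFxx1.differentiable one_ne_zero) _)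
      have h2 := (h1.fun_pow 2).const_mul (Real.exp (-1 * x))
      exact h2.congr_deriv (by rw [show (2:ℕ) - 1 = 1 from rfl]; push_cast; ring)))
  obtain ⟨-, hHD⟩ := hkey
  have hVfun : (fun s => ∫ x in (0:ℝ)..1, Real.exp (-1 * x) * (iteratedDeriv 2 (f s) x) ^ 2)
      = fun s => ∫ x in (0:ℝ)..1, Real.exp (-1 * x) * (pdx (pdx F) (s, x)) ^ 2 := by
    funext s
    exact intervalIntegral.integral_congr (fun x _ => by rw [hiter s x])
  -- integration by parts
  set wfn : ℝ → ℝ := fun x => pdx (pdx F) (t, x) with hwfn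
  set wxfn : ℝ → ℝ := fun x => pdx (pdx (pdx F)) (t, x) with hwxfn
  set alfn : ℝ → ℝ := fun x => (ζ * N t - x * deriv l t) / l t with halfn
  set Φfn : ℝ → ℝ := fun x => Real.exp (-1 * x) * (alfn x * wfn x ^ 2) with hΦfn
  set ψfn : ℝ → ℝ := fun x => Real.exp (-1 * x) * (-1) * (alfn x * wfn x ^ 2)
    + Real.exp (-1 * x) * ((-(deriv l t) / l t) * wfn x ^ 2
      + alfn x * (2 * wfn x * wxfn x)) with hψfn
  have hexpd : ∀ x : ℝ, HasDerivAt (fun x' : ℝ => Real.exp (-1 * x'))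
      (Real.exp (-1 * x) * (-1)) x := by
    intro x
    have h := ((hasDerivAt_id x).const_mul (-1 : ℝ)).exp
    simpa using h
  have hwd : ∀ x : ℝ, HasDerivAt (fun y => pdx (pdx F) (t, y)) (pdx (pdx (pdx F)) (t, x)) x :=
    fun x => hasDerivAt_pdx ((hFxx1.differentiable one_ne_zero) _)
  have hΦd : ∀ x : ℝ, HasDerivAt Φfn (ψfn x) x := by
    intro x
    simp only [hΦfn, hψfn, halfn, hwfn, hwxfn]
    have h1 : HasDerivAt (fun x' => ((ζ * N t - x' * deriv l t) / l t) * pdx (pdx F) (t, x') ^ 2)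
        ((-(deriv l t) / l t) * pdx (pdx F) (t, x) ^ 2
          + ((ζ * N t - x * deriv l t) / l t)
            * (2 * pdx (pdx F) (t, x) * pdx (pdx (pdx F)) (t, x))) x := by
      have h2 := (hlin x).mul ((hwd x).fun_pow 2)
      exact h2.congr_deriv (by rw [show (2:ℕ) - 1 = 1 from rfl]; push_cast; ring)
    exact (hexpd x).mul h1
  have hψc : Continuous ψfn := by
    rw [hψfn]
    simp only [halfn, hwfn, hwxfn]
    have halc : Continuous (fun x : ℝ => (ζ * N t - x * deriv l t) / l t) :=
      (continuous_const.sub (continuous_id.mul continuous_const)).div_const _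
    exact ((hexpc.mul continuous_const).mul (halc.mul (hwcont.pow 2))).add
      (hexpc.mul ((continuous_const.mul (hwcont.pow 2)).add
        (halc.mul ((continuous_const.mul hwcont).mul hwxcont))))
  have hFTC : (∫ x in (0:ℝ)..1, ψfn x) = Φfn 1 - Φfn 0 :=
    intervalIntegral.integral_eq_sub_of_hasDerivAt (fun x _ => hΦd x)
      (hψc.intervalIntegrable 0 1)
  have hRcont : Continuous
      (fun x => (3 * (deriv l t / l t) - alfn x) * (Real.exp (-1 * x) * wfn x ^ 2)) := by
    simp only [halfn, hwfn]
    have halc : Continuous (fun x : ℝ => (ζ * N t - x * deriv l t) / l t) :=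
      (continuous_const.sub (continuous_id.mul continuous_const)).div_const _
    exact (continuous_const.sub halc).mul (hexpc.mul (hwcont.pow 2))
  have hIeq : ∀ x ∈ Set.Icc (0:ℝ) 1,
      Real.exp (-1 * x) * (2 * pdx (pdx F) (t, x) * pdt (pdx (pdx F)) (t, x))
        = -ψfn x + (3 * (deriv l t / l t) - alfn x) * (Real.exp (-1 * x) * wfn x ^ 2) := by
    intro x hx
    simp only [hψfn, halfn, hwfn, hwxfn]
    rw [hE2 x hx]
    ring
  have hI'eqint : (∫ x in (0:ℝ)..1,
        Real.exp (-1 * x) * (2 * pdx (pdx F) (t, x) * pdt (pdx (pdx F)) (t, x)))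
      = -(Φfn 1 - Φfn 0)
        + ∫ x in (0:ℝ)..1, (3 * (deriv l t / l t) - alfn x)
            * (Real.exp (-1 * x) * wfn x ^ 2) := by
    have h1 : (∫ x in (0:ℝ)..1,
        Real.exp (-1 * x) * (2 * pdx (pdx F) (t, x) * pdt (pdx (pdx F)) (t, x)))
        = ∫ x in (0:ℝ)..1, (-ψfn x + (3 * (deriv l t / l t) - alfn x)
            * (Real.exp (-1 * x) * wfn x ^ 2)) := by
      refine intervalIntegral.integral_congr (fun x hx => ?_)
      rw [Set.uIcc_of_le (by norm_num : (0:ℝ) ≤ 1)] at hx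
      exact hIeq x hx
    rw [h1, intervalIntegral.integral_add (f := fun x => -ψfn x) ((hψc.neg).intervalIntegrable 0 1)
      (hRcont.intervalIntegrable 0 1), intervalIntegral.integral_neg, hFTC]
  -- bounds
  have hRle : (∫ x in (0:ℝ)..1, (3 * (deriv l t / l t) - alfn x)
        * (Real.exp (-1 * x) * wfn x ^ 2))
      ≤ -β3 * ∫ x in (0:ℝ)..1, Real.exp (-1 * x) * (pdx (pdx F) (t, x)) ^ 2 := by
    have h1 : ∀ x ∈ Set.Icc (0:ℝ) 1, (3 * (deriv l t / l t) - alfn x)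
        * (Real.exp (-1 * x) * wfn x ^ 2)
        ≤ -β3 * (Real.exp (-1 * x) * (pdx (pdx F) (t, x)) ^ 2) := by
      intro x hx
      have h2 : 3 * (deriv l t / l t) - alfn x ≤ -β3 := by
        simp only [halfn]
        exact hpoint x hx
      have h3 : (0:ℝ) ≤ Real.exp (-1 * x) * (pdx (pdx F) (t, x)) ^ 2 := by positivity
      exact mul_le_mul_of_nonneg_right h2 h3
    have h4 := intervalIntegral.integral_mono_on (μ := MeasureTheory.volume) (by norm_num : (0:ℝ) ≤ 1)
      (hRcont.intervalIntegrable 0 1)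
      (((continuous_const (y := -β3)).mul (hIcont t)).intervalIntegrable 0 1) h1
    simp only [Pi.mul_apply] at h4
    rw [intervalIntegral.integral_const_mul] at h4
    exact h4
  have hΦ1 : δ3 * wfn 1 ^ 2 ≤ Φfn 1 := by
    simp only [hΦfn, hδ3]
    have h1 : c ≤ alfn 1 := by
      simp only [halfn]
      exact hαlo 1 ⟨by norm_num, le_refl 1⟩
    have h2 : Real.exp (-1 * (1:ℝ)) = Real.exp (-1) := by norm_num
    rw [h2]
    have h3 : (0:ℝ) ≤ wfn 1 ^ 2 := sq_nonneg _
    have h4 : (0:ℝ) < Real.exp (-1) := Real.exp_pos _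
    have h5 := mul_le_mul_of_nonneg_left (mul_le_mul_of_nonneg_right h1 h3) h4.le
    linarith only [h5]
  have hΦ0 : Φfn 0 ≤ Amax * wfn 0 ^ 2 := by
    simp only [hΦfn]
    have h1 : alfn 0 ≤ Amax := by
      simp only [halfn]
      exact hαhi 0 ⟨le_refl 0, by norm_num⟩
    have h2 : Real.exp (-1 * (0:ℝ)) = 1 := by norm_num
    rw [h2, one_mul]
    exact mul_le_mul_of_nonneg_right h1 (sq_nonneg _)
  have hθb : Amax * wfn 0 ^ 2
      ≤ θ3 * ((l t - le) ^ 2 + (f t 1 - fpe) ^ 2 + pdx F (t, 1) ^ 2) := by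
    have hsq : wfn 0 ^ 2
        ≤ ((K : ℝ) * (|l t - le| + |f t 1 - fpe|) + MW1 * |pdx F (t, 1)|) ^ 2 := by
      have h0 := pow_le_pow_left₀ (abs_nonneg (pdx (pdx F) (t, 0))) hw0abs 2
      rw [sq_abs] at h0
      simpa [hwfn] using h0
    have h6 := quad_bound Amax (K : ℝ) MW1 |l t - le| |f t 1 - fpe| |pdx F (t, 1)|
      (wfn 0) hAmaxpos K.coe_nonneg hMW1pos.le (abs_nonneg _) (abs_nonneg _) (abs_nonneg _) hsq
    rw [sq_abs, sq_abs, sq_abs] at h6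
    rw [hθ3]
    exact h6
  -- final assembly
  refine ⟨∫ x in (0:ℝ)..1,
    Real.exp (-1 * x) * (2 * pdx (pdx F) (t, x) * pdt (pdx (pdx F)) (t, x)), ?_, ?_⟩
  · rw [hVfun]
    exact hHD
  · have hVt : (∫ x in (0:ℝ)..1, Real.exp (-1 * x) * (iteratedDeriv 2 (f t) x) ^ 2)
        = ∫ x in (0:ℝ)..1, Real.exp (-1 * x) * (pdx (pdx F) (t, x)) ^ 2 :=
      intervalIntegral.integral_congr (fun x _ => by rw [hiter t x])
    rw [hVt, hiter t 1, hderiv_fx t 1, hI'eqint]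
    have hwf1 : pdx (pdx F) ((t:ℝ), (1:ℝ)) = wfn 1 := by simp only [hwfn]
    rw [hwf1]
    linarith only [hRle, hΦ1, hΦ0, hθb]
end

section
/- Let T > 0, γ > 0, let α : [0,T]×[0,1] → ℝ be continuously differentiable, and let f : [0,T]×[0,1] → ℝ be continuously differentiable and satisfy the transport equation ∂ₜf(t,x) + α(t,x)·∂ₓf(t,x) = 0 on [0,T]×[0,1]. Then the weighted energy V(t) := ∫₀¹ e^{−γ·x}·f(t,x)² dx is differentiable on (0,T) and V'(t) = −α(t,1)·e^{−γ}·f(t,1)² + α(t,0)·f(t,0)² + ∫₀¹ (∂ₓα(t,x) − γ·α(t,x))·e^{−γ·x}·f(t,x)² dx. -/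
set_option maxHeartbeats 1600000


/-- derivative of the weighted energy `V(t) = ∫₀¹ e^{−γx} f(t,x)² dx`
along a solution of the transport equation `∂ₜf + α·∂ₓf = 0` on `[0,T]×[0,1]`. -/
theorem weighted_energy_deriv_transport
    (T γ : ℝ) (hT : 0 < T) (hγ : 0 < γ)
    (α f : ℝ → ℝ → ℝ)
    (hα : ContDiff ℝ 1 (Function.uncurry α))
    (hf : ContDiff ℝ 1 (Function.uncurry f))
    (hpde : ∀ t ∈ Set.Icc (0:ℝ) T, ∀ x ∈ Set.Icc (0:ℝ) 1,
      deriv (fun s => f s x) t + α t x * deriv (f t) x = 0) :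
    ∀ t ∈ Set.Ioo (0:ℝ) T,
      HasDerivAt (fun s => ∫ x in (0:ℝ)..1, Real.exp (-γ * x) * (f s x) ^ 2)
        (-(α t 1) * Real.exp (-γ) * (f t 1) ^ 2 + α t 0 * (f t 0) ^ 2
          + ∫ x in (0:ℝ)..1, (deriv (α t) x - γ * α t x) * Real.exp (-γ * x) * (f t x) ^ 2)
        t := by
  intro t ht
  have hfc : Continuous (Function.uncurry f) := hf.continuous
  have hαc : Continuous (Function.uncurry α) := hα.continuous
  set Df := fderiv ℝ (Function.uncurry f) with hDfdef
  set Dα := fderiv ℝ (Function.uncurry α) with hDαdef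
  have hDfc : Continuous Df := hf.continuous_fderiv one_ne_zero
  have hDαc : Continuous Dα := hα.continuous_fderiv one_ne_zero
  -- partial derivatives
  have hft : ∀ s x : ℝ, HasDerivAt (fun s' => f s' x) (Df (s, x) (1, 0)) s := by
    intro s x
    have h1 : HasDerivAt (fun s' : ℝ => ((s', x) : ℝ × ℝ)) ((1:ℝ), (0:ℝ)) s :=
      (hasDerivAt_id s).prodMk (hasDerivAt_const s x)
    exact ((hf.differentiable one_ne_zero (s, x)).hasFDerivAt.comp_hasDerivAt s h1)
  have hfx : ∀ s x : ℝ, HasDerivAt (f s) (Df (s, x) (0, 1)) x := by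
    intro s x
    have h1 : HasDerivAt (fun x' : ℝ => ((s, x') : ℝ × ℝ)) ((0:ℝ), (1:ℝ)) x :=
      (hasDerivAt_const x s).prodMk (hasDerivAt_id x)
    exact ((hf.differentiable one_ne_zero (s, x)).hasFDerivAt.comp_hasDerivAt x h1)
  have hαx : ∀ s x : ℝ, HasDerivAt (α s) (Dα (s, x) (0, 1)) x := by
    intro s x
    have h1 : HasDerivAt (fun x' : ℝ => ((s, x') : ℝ × ℝ)) ((0:ℝ), (1:ℝ)) x :=
      (hasDerivAt_const x s).prodMk (hasDerivAt_id x)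
    exact ((hα.differentiable one_ne_zero (s, x)).hasFDerivAt.comp_hasDerivAt x h1)
  have hαderiv : ∀ x : ℝ, deriv (α t) x = Dα (t, x) (0, 1) := fun x => (hαx t x).deriv
  -- continuity facts
  have hexpc : Continuous fun x : ℝ => Real.exp (-γ * x) :=
    Real.continuous_exp.comp (continuous_const.mul continuous_id)
  have hftc : Continuous fun p : ℝ × ℝ => Df p (1, 0) :=
    hDfc.clm_apply continuous_const
  have hfxc : Continuous fun x : ℝ => Df (t, x) (0, 1) :=
    (hDfc.comp (Continuous.prodMk_right t)).clm_apply continuous_const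
  have hαxc : Continuous fun x : ℝ => Dα (t, x) (0, 1) :=
    (hDαc.comp (Continuous.prodMk_right t)).clm_apply continuous_const
  -- differentiation under the integral sign
  set F' : ℝ → ℝ → ℝ := fun s x => Real.exp (-γ * x) * (2 * f s x * Df (s, x) (1, 0))
    with hF'def
  have hF'c : Continuous fun p : ℝ × ℝ => F' p.1 p.2 := by
    apply (hexpc.comp continuous_snd).mul
    exact (continuous_const.mul hfc).mul hftc
  -- compact bound
  obtain ⟨C, hC⟩ := ((isCompact_Icc (a := t - 1) (b := t + 1)).prod
    (isCompact_Icc (a := (0:ℝ)) (b := 1))).exists_bound_of_continuousOn hF'c.continuousOn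
  have h1 : ∀ᶠ s in nhds t, MeasureTheory.AEStronglyMeasurable
      (fun x => Real.exp (-γ * x) * (f s x) ^ 2)
      (MeasureTheory.volume.restrict (Set.uIoc (0:ℝ) 1)) := by
    filter_upwards with s
    exact (hexpc.mul ((hfc.comp (Continuous.prodMk_right s)).pow 2)).aestronglyMeasurable
  have h2 : IntervalIntegrable (fun x => Real.exp (-γ * x) * (f t x) ^ 2)
      MeasureTheory.volume 0 1 :=
    (hexpc.mul ((hfc.comp (Continuous.prodMk_right t)).pow 2)).intervalIntegrable 0 1
  have h3 : MeasureTheory.AEStronglyMeasurable (F' t)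
      (MeasureTheory.volume.restrict (Set.uIoc (0:ℝ) 1)) :=
    (hF'c.comp (Continuous.prodMk_right t)).aestronglyMeasurable
  have h4 : ∀ᵐ x ∂(MeasureTheory.volume : MeasureTheory.Measure ℝ), x ∈ Set.uIoc (0:ℝ) 1 →
      ∀ s ∈ Metric.ball t 1, ‖F' s x‖ ≤ C := by
    filter_upwards with x hx s hs
    have hx' : x ∈ Set.Icc (0:ℝ) 1 := by
      have : x ∈ Set.Ioc (0:ℝ) 1 := by rwa [Set.uIoc_of_le (zero_le_one)] at hx
      exact Set.Ioc_subset_Icc_self this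
    have hs' : s ∈ Set.Icc (t - 1) (t + 1) := by
      rw [Real.ball_eq_Ioo] at hs
      exact Set.Ioo_subset_Icc_self hs
    exact hC (s, x) (Set.mk_mem_prod hs' hx')
  have h5 : IntervalIntegrable (fun _ : ℝ => C) MeasureTheory.volume 0 1 :=
    intervalIntegrable_const
  have h6 : ∀ᵐ x ∂(MeasureTheory.volume : MeasureTheory.Measure ℝ), x ∈ Set.uIoc (0:ℝ) 1 →
      ∀ s ∈ Metric.ball t 1, HasDerivAt (fun s' => Real.exp (-γ * x) * (f s' x) ^ 2)
        (F' s x) s := by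
    filter_upwards with x hx s hs
    simpa [hF'def] using ((hft s x).pow 2).const_mul (Real.exp (-γ * x))
  have hV :
      HasDerivAt (fun s => ∫ x in (0:ℝ)..1, Real.exp (-γ * x) * (f s x) ^ 2)
        (∫ x in (0:ℝ)..1, F' t x) t :=
    (intervalIntegral.hasDerivAt_integral_of_dominated_loc_of_deriv_le
      (Metric.ball_mem_nhds t one_pos) h1 h2 h3 h4 h5 h6).2
  -- integration by parts data
  set u : ℝ → ℝ := fun x => α t x * Real.exp (-γ * x) with hudef
  set u' : ℝ → ℝ := fun x => (Dα (t, x) (0, 1) - γ * α t x) * Real.exp (-γ * x) with hu'def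
  set v : ℝ → ℝ := fun x => f t x ^ 2 with hvdef
  set v' : ℝ → ℝ := fun x => 2 * f t x * Df (t, x) (0, 1) with hv'def
  have he : ∀ x : ℝ, HasDerivAt (fun y => Real.exp (-γ * y)) (-γ * Real.exp (-γ * x)) x := by
    intro x
    have := ((hasDerivAt_id x).const_mul (-γ)).exp
    simpa [mul_comm] using this
  have hu : ∀ x : ℝ, HasDerivAt u (u' x) x := by
    intro x
    have := (hαx t x).mul (he x)
    rw [show u' x = Dα (t, x) (0, 1) * Real.exp (-γ * x) + α t x * (-γ * Real.exp (-γ * x)) by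
      simp only [hu'def]; ring]
    exact this
  have hv : ∀ x : ℝ, HasDerivAt v (v' x) x := by
    intro x
    rw [show v' x = ((2:ℕ):ℝ) * f t x ^ (2 - 1) * Df (t, x) (0, 1) by
      simp only [hv'def]; norm_num]
    exact (hfx t x).pow 2
  have hu'int : IntervalIntegrable u' MeasureTheory.volume 0 1 :=
    ((hαxc.sub (continuous_const.mul (hαc.comp (Continuous.prodMk_right t)))).mul
      hexpc).intervalIntegrable 0 1
  have hv'int : IntervalIntegrable v' MeasureTheory.volume 0 1 :=
    ((continuous_const.mul (hfc.comp (Continuous.prodMk_right t))).mul hfxc).intervalIntegrable 0 1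
  have hparts : ∫ x in (0:ℝ)..1, u x * v' x
      = u 1 * v 1 - u 0 * v 0 - ∫ x in (0:ℝ)..1, u' x * v x :=
    intervalIntegral.integral_mul_deriv_eq_deriv_mul
      (fun x _ => hu x) (fun x _ => hv x) hu'int hv'int
  -- use the PDE to rewrite the integrand
  have hcongr : ∫ x in (0:ℝ)..1, F' t x = ∫ x in (0:ℝ)..1, -(u x * v' x) := by
    apply intervalIntegral.integral_congr
    intro x hx
    rw [Set.uIcc_of_le zero_le_one] at hx
    have hpde' := hpde t (Set.mem_Icc.mpr ⟨ht.1.le, ht.2.le⟩) x hx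
    rw [(hft t x).deriv, (hfx t x).deriv] at hpde'
    have hsub : Df (t, x) (1, 0) = -(α t x * Df (t, x) (0, 1)) := by linarith
    simp only [hF'def, hudef, hv'def, hsub]
    ring
  have hfinal : ∫ x in (0:ℝ)..1, F' t x
      = -(α t 1) * Real.exp (-γ) * (f t 1) ^ 2 + α t 0 * (f t 0) ^ 2
        + ∫ x in (0:ℝ)..1, (deriv (α t) x - γ * α t x) * Real.exp (-γ * x) * (f t x) ^ 2 := by
    rw [hcongr, intervalIntegral.integral_neg, hparts]
    have hInt : (∫ x in (0:ℝ)..1, u' x * v x)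
        = ∫ x in (0:ℝ)..1, (deriv (α t) x - γ * α t x) * Real.exp (-γ * x) * (f t x) ^ 2 := by
      apply intervalIntegral.integral_congr
      intro x _
      simp only [hu'def, hvdef, hαderiv]
    rw [hInt]
    simp only [hudef, hvdef, mul_one, mul_zero, Real.exp_zero]
    ring
  rw [← hfinal]
  exact hV
end

section
/- Let L, B, Kd, η, ρ0, Veff be positive reals, le ∈ (0, L), Ne > 0, fpe ∈ ℝ, k1, k2 ∈ ℝ, and define q(l) := η·ρ0·Veff·(L − l)/(B·ρ0 + Kd·(L − l)), b1 := Ne·q'(le), b2 := q(le), ΔPe := Ne·q(le), Fine := ρ0·Veff·Ne·fpe, and D(l) := (Ne − k1·ΔPe)·q(l)/(1 − k1·q(l)). Assume 1 − k1·b2 ≠ 0. Then the closed-loop inlet filling-ratio map G(l) := (Fine + k2·(D(l) − ΔPe))/(ρ0·Veff·(Ne + k1·(D(l) − ΔPe))) satisfies G(le) = fpe and is differentiable at le with derivative G'(le) = b1·(k2 − fpe·ρ0·Veff·k1)/(ρ0·Veff·Ne·(1 − k1·b2)). -/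
/-- Closed-loop die pressure difference `D(l) = (Ne − k1·ΔPe)·q(l)/(1 − k1·q(l))`. -/
noncomputable def Dfun (η ρ0 Veff L B Kd Ne ΔPe k1 : ℝ) (l : ℝ) : ℝ :=
  (Ne - k1 * ΔPe) * qfun η ρ0 Veff L B Kd l / (1 - k1 * qfun η ρ0 Veff L B Kd l)

/-- Closed-loop inlet filling-ratio map
`G(l) = (Fine + k2·(D(l) − ΔPe))/(ρ0·Veff·(Ne + k1·(D(l) − ΔPe)))`. -/
noncomputable def Gfun (η ρ0 Veff L B Kd Ne ΔPe Fine k1 k2 : ℝ) (l : ℝ) : ℝ :=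
  (Fine + k2 * (Dfun η ρ0 Veff L B Kd Ne ΔPe k1 l - ΔPe)) /
    (ρ0 * Veff * (Ne + k1 * (Dfun η ρ0 Veff L B Kd Ne ΔPe k1 l - ΔPe)))

/-- the closed-loop inlet filling-ratio map `G` sends the equilibrium
interface position to the equilibrium filling ratio and has derivative
`b1·(k2 − fpe·ρ0·Veff·k1)/(ρ0·Veff·Ne·(1 − k1·b2))` at `le`. -/
theorem closed_loop_inlet_filling_ratio_deriv
    (L B Kd η ρ0 Veff : ℝ)
    (hL : 0 < L) (hB : 0 < B) (hKd : 0 < Kd) (hη : 0 < η) (hρ0 : 0 < ρ0) (hVeff : 0 < Veff)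
    (le Ne fpe k1 k2 : ℝ) (hle : le ∈ Set.Ioo 0 L) (hNe : 0 < Ne)
    (b1 b2 ΔPe Fine : ℝ)
    (hb1 : b1 = Ne * deriv (qfun η ρ0 Veff L B Kd) le)
    (hb2 : b2 = qfun η ρ0 Veff L B Kd le)
    (hΔPe : ΔPe = Ne * qfun η ρ0 Veff L B Kd le)
    (hFine : Fine = ρ0 * Veff * Ne * fpe)
    (hden : 1 - k1 * b2 ≠ 0) :
    Gfun η ρ0 Veff L B Kd Ne ΔPe Fine k1 k2 le = fpe ∧
    HasDerivAt (Gfun η ρ0 Veff L B Kd Ne ΔPe Fine k1 k2)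
      (b1 * (k2 - fpe * ρ0 * Veff * k1) / (ρ0 * Veff * Ne * (1 - k1 * b2))) le := by
  obtain ⟨hle0, hleL⟩ := hle
  have hd0 : B * ρ0 + Kd * (L - le) > 0 := by
    have : 0 < L - le := by linarith
    positivity
  have hd0' : B * ρ0 + Kd * (L - le) ≠ 0 := ne_of_gt hd0
  -- derivative of q
  have hnum : HasDerivAt (fun l : ℝ => η * ρ0 * Veff * (L - l)) (η * ρ0 * Veff * (-1)) le :=
    ((hasDerivAt_id le).const_sub L).const_mul (η * ρ0 * Veff)
  have hden1 : HasDerivAt (fun l : ℝ => B * ρ0 + Kd * (L - l)) (Kd * (-1)) le :=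
    (((hasDerivAt_id le).const_sub L).const_mul Kd).const_add (B * ρ0)
  set q' : ℝ := (η * ρ0 * Veff * (-1) * (B * ρ0 + Kd * (L - le)) -
      η * ρ0 * Veff * (L - le) * (Kd * (-1))) / (B * ρ0 + Kd * (L - le)) ^ 2 with hq'def
  have hq : HasDerivAt (qfun η ρ0 Veff L B Kd) q' le := by
    have := hnum.div hden1 hd0'
    simpa [qfun.eq_unfold, hq'def, Pi.div_def] using this
  have hb1' : b1 = Ne * q' := by rw [hb1, hq.deriv]
  -- value of q at le
  have hqle : qfun η ρ0 Veff L B Kd le = b2 := hb2.symm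
  have hkb2 : 1 - k1 * qfun η ρ0 Veff L B Kd le ≠ 0 := by rw [hqle]; exact hden
  -- derivative of D
  set c0 : ℝ := Ne - k1 * ΔPe with hc0
  have hDnum : HasDerivAt (fun l => c0 * qfun η ρ0 Veff L B Kd l) (c0 * q') le :=
    hq.const_mul c0
  have hDden : HasDerivAt (fun l => 1 - k1 * qfun η ρ0 Veff L B Kd l) (-(k1 * q')) le :=
    (hq.const_mul k1).const_sub 1
  set d' : ℝ := (c0 * q' * (1 - k1 * qfun η ρ0 Veff L B Kd le) -
      c0 * qfun η ρ0 Veff L B Kd le * -(k1 * q')) /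
      (1 - k1 * qfun η ρ0 Veff L B Kd le) ^ 2 with hd'def
  have hD : HasDerivAt (Dfun η ρ0 Veff L B Kd Ne ΔPe k1) d' le := by
    have := hDnum.div hDden hkb2
    simpa [Dfun.eq_unfold, hd'def, Pi.div_def] using this
  -- D(le) = ΔPe
  have hDle : Dfun η ρ0 Veff L B Kd Ne ΔPe k1 le = ΔPe := by
    rw [Dfun, hqle, hΔPe, ← hb2]
    field_simp
  -- value of G at le
  have hρVN : ρ0 * Veff * Ne ≠ 0 := by positivity
  have hGle : Gfun η ρ0 Veff L B Kd Ne ΔPe Fine k1 k2 le = fpe := by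
    rw [Gfun, hDle, hFine]
    field_simp
    simp only [sub_self, mul_zero, zero_mul, add_zero]
    field_simp
  refine ⟨hGle, ?_⟩
  -- derivative of G
  have hGnum : HasDerivAt (fun l => Fine + k2 * (Dfun η ρ0 Veff L B Kd Ne ΔPe k1 l - ΔPe))
      (k2 * d') le := ((hD.sub_const ΔPe).const_mul k2).const_add Fine
  have hGden : HasDerivAt (fun l => ρ0 * Veff * (Ne + k1 * (Dfun η ρ0 Veff L B Kd Ne ΔPe k1 l - ΔPe)))
      (ρ0 * Veff * (k1 * d')) le :=
    (((hD.sub_const ΔPe).const_mul k1).const_add Ne).const_mul (ρ0 * Veff)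
  have hGdle : ρ0 * Veff * (Ne + k1 * (Dfun η ρ0 Veff L B Kd Ne ΔPe k1 le - ΔPe)) ≠ 0 := by
    rw [hDle]; simpa using hρVN
  have hG := hGnum.div hGden hGdle
  have hGfun : HasDerivAt (Gfun η ρ0 Veff L B Kd Ne ΔPe Fine k1 k2)
      ((k2 * d' * (ρ0 * Veff * (Ne + k1 * (Dfun η ρ0 Veff L B Kd Ne ΔPe k1 le - ΔPe))) -
        (Fine + k2 * (Dfun η ρ0 Veff L B Kd Ne ΔPe k1 le - ΔPe)) * (ρ0 * Veff * (k1 * d'))) /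
        (ρ0 * Veff * (Ne + k1 * (Dfun η ρ0 Veff L B Kd Ne ΔPe k1 le - ΔPe))) ^ 2) le := by
    simpa [Gfun.eq_unfold, Pi.div_def] using hG
  convert hGfun using 1
  rw [hDle, hFine]
  -- reduce to algebra: compute d' in terms of b1, b2
  have hd'val : d' = b1 / (1 - k1 * b2) := by
    rw [hd'def, hqle, hc0, hΔPe, ← hb2, hb1']
    have hq'b1 : q' = b1 / Ne := by rw [hb1']; field_simp
    field_simp
    ring
  rw [hd'val]
  have hNe' : Ne ≠ 0 := ne_of_gt hNe
  have hρ' : ρ0 ≠ 0 := ne_of_gt hρ0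
  have hV' : Veff ≠ 0 := ne_of_gt hVeff
  field_simp
  have hNN : Ne ^ 2 * Ne⁻¹ ^ 2 = 1 := by field_simp
  linear_combination (-(b1 * k2 - b1 * fpe * ρ0 * Veff * k1)) * hNN
end

section
/- Let L, B, Kd, ζ, η, ρ0, Seff, Veff be positive reals, le ∈ (0, L), fpe ∈ (0, 1), Ne > 0, define q(l) := η·ρ0·Veff·(L − l)/(B·ρ0 + Kd·(L − l)) and F(l, N, fp) := ((Kd/η)·N·q(l) − ρ0·Veff·N·fp)/(ρ0·Seff·(1 − fp)), and assume the equilibrium relation (Kd/η)·Ne·q(le) = ρ0·Veff·Ne·fpe. Then F is differentiable at (le, Ne, fpe) with partial derivatives a1 := ∂F/∂l = −Kd·ρ0·Veff·B·Ne/(Seff·(1 − fpe)·(B·ρ0 + Kd·(L − le))²), a2 := ∂F/∂N = 0, and a3 := ∂F/∂fp = −Veff·Ne/(Seff·(1 − fpe)); in particular a1 < 0 and a3 < 0. -/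
/-- Interface velocity
`F(l, N, fp) = ((Kd/η)·N·q(l) − ρ0·Veff·N·fp)/(ρ0·Seff·(1 − fp))` of the isothermal
extrusion model. -/
noncomputable def Ffun (η ρ0 Veff Seff L B Kd : ℝ) (l N fp : ℝ) : ℝ :=
  ((Kd / η) * N * qfun η ρ0 Veff L B Kd l - ρ0 * Veff * N * fp) / (ρ0 * Seff * (1 - fp))

/-- at an equilibrium `(le, Ne, fpe)` the interface velocity `F` is
differentiable, with partial derivatives
`a1 = −Kd·ρ0·Veff·B·Ne/(Seff·(1 − fpe)·(B·ρ0 + Kd·(L − le))²)`, `a2 = 0`,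
`a3 = −Veff·Ne/(Seff·(1 − fpe))`; in particular `a1 < 0` and `a3 < 0`. -/
theorem interface_velocity_partial_derivs
    (L B Kd ζ η ρ0 Seff Veff : ℝ)
    (hL : 0 < L) (hB : 0 < B) (hKd : 0 < Kd) (hζ : 0 < ζ) (hη : 0 < η)
    (hρ0 : 0 < ρ0) (hSeff : 0 < Seff) (hVeff : 0 < Veff)
    (le fpe Ne : ℝ) (hle : le ∈ Set.Ioo 0 L) (hfpe : fpe ∈ Set.Ioo (0:ℝ) 1) (hNe : 0 < Ne)
    (heq : (Kd / η) * Ne * qfun η ρ0 Veff L B Kd le = ρ0 * Veff * Ne * fpe) :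
    DifferentiableAt ℝ
      (fun p : ℝ × ℝ × ℝ => Ffun η ρ0 Veff Seff L B Kd p.1 p.2.1 p.2.2) (le, Ne, fpe) ∧
    HasDerivAt (fun s => Ffun η ρ0 Veff Seff L B Kd s Ne fpe)
      (-(Kd * ρ0 * Veff * B * Ne) / (Seff * (1 - fpe) * (B * ρ0 + Kd * (L - le)) ^ 2)) le ∧
    HasDerivAt (fun s => Ffun η ρ0 Veff Seff L B Kd le s fpe) 0 Ne ∧
    HasDerivAt (fun s => Ffun η ρ0 Veff Seff L B Kd le Ne s)
      (-(Veff * Ne) / (Seff * (1 - fpe))) fpe ∧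
    -(Kd * ρ0 * Veff * B * Ne) / (Seff * (1 - fpe) * (B * ρ0 + Kd * (L - le)) ^ 2) < 0 ∧
    -(Veff * Ne) / (Seff * (1 - fpe)) < 0 := by
  obtain ⟨hle0, hleL⟩ := hle
  obtain ⟨hfp0, hfp1⟩ := hfpe
  have hD : (0:ℝ) < B * ρ0 + Kd * (L - le) :=
    add_pos (mul_pos hB hρ0) (mul_pos hKd (by linarith))
  have hD' : B * ρ0 + Kd * (L - le) ≠ 0 := ne_of_gt hD
  have h1fp : (0:ℝ) < 1 - fpe := by linarith
  have hden : ρ0 * Seff * (1 - fpe) ≠ 0 := by nlinarith [mul_pos (mul_pos hρ0 hSeff) h1fp]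
  -- derivative in l
  have hsub : HasDerivAt (fun l : ℝ => L - l) (-1) le := by
    simpa using (hasDerivAt_id le).const_sub L
  have hnum : HasDerivAt (fun l : ℝ => η * ρ0 * Veff * (L - l)) (η * ρ0 * Veff * (-1)) le :=
    hsub.const_mul _
  have hdenl : HasDerivAt (fun l : ℝ => B * ρ0 + Kd * (L - l)) (Kd * (-1)) le := by
    simpa using (hsub.const_mul Kd).const_add (B * ρ0)
  have hq : HasDerivAt (fun l : ℝ => qfun η ρ0 Veff L B Kd l)
      ((η * ρ0 * Veff * (-1) * (B * ρ0 + Kd * (L - le)) -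
        η * ρ0 * Veff * (L - le) * (Kd * (-1))) / (B * ρ0 + Kd * (L - le)) ^ 2) le := by
    simpa [qfun, Pi.div_def] using hnum.div hdenl hD'
  have hFl : HasDerivAt (fun s => Ffun η ρ0 Veff Seff L B Kd s Ne fpe)
      (-(Kd * ρ0 * Veff * B * Ne) / (Seff * (1 - fpe) * (B * ρ0 + Kd * (L - le)) ^ 2)) le := by
    have := ((hq.const_mul ((Kd / η) * Ne)).sub_const (ρ0 * Veff * Ne * fpe)).div_const
      (ρ0 * Seff * (1 - fpe))
    convert this using 1
    case e'_4 => rfl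
    case e'_5 => rfl
    case e'_8 => rfl
    field_simp
    ring
  -- derivative in N
  have heq' : (Kd / η) * qfun η ρ0 Veff L B Kd le = ρ0 * Veff * fpe := by
    have hNe' : Ne ≠ 0 := ne_of_gt hNe
    field_simp at heq ⊢
    nlinarith [heq]
  have hFN : HasDerivAt (fun s => Ffun η ρ0 Veff Seff L B Kd le s fpe) 0 Ne := by
    have hc : (fun s => Ffun η ρ0 Veff Seff L B Kd le s fpe) = fun _ => (0:ℝ) := by
      funext s
      simp only [Ffun]
      have : (Kd / η) * s * qfun η ρ0 Veff L B Kd le - ρ0 * Veff * s * fpe = 0 := by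
        linear_combination s * heq'
      rw [this, zero_div]
    rw [hc]
    exact hasDerivAt_const _ _
  -- derivative in fp
  have hnum3 : HasDerivAt (fun s : ℝ =>
      (Kd / η) * Ne * qfun η ρ0 Veff L B Kd le - ρ0 * Veff * Ne * s)
      (-(ρ0 * Veff * Ne)) fpe := by
    simpa using ((hasDerivAt_id fpe).const_mul (ρ0 * Veff * Ne)).const_sub
      ((Kd / η) * Ne * qfun η ρ0 Veff L B Kd le)
  have hden3 : HasDerivAt (fun s : ℝ => ρ0 * Seff * (1 - s)) (ρ0 * Seff * (-1)) fpe := by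
    simpa using ((hasDerivAt_id fpe).const_sub (1:ℝ)).const_mul (ρ0 * Seff)
  have hFfp : HasDerivAt (fun s => Ffun η ρ0 Veff Seff L B Kd le Ne s)
      (-(Veff * Ne) / (Seff * (1 - fpe))) fpe := by
    have := hnum3.div hden3 hden
    simp only [Ffun, Pi.div_def] at this ⊢
    convert this using 1
    case e'_4 => rfl
    case e'_5 => rfl
    rw [heq]
    field_simp
    ring
  -- differentiability of the 3-variable map
  have hdiff : DifferentiableAt ℝ
      (fun p : ℝ × ℝ × ℝ => Ffun η ρ0 Veff Seff L B Kd p.1 p.2.1 p.2.2) (le, Ne, fpe) := by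
    simp only [Ffun, qfun, div_eq_mul_inv]
    have hA : DifferentiableAt ℝ
        (fun p : ℝ × ℝ × ℝ => (B * ρ0 + Kd * (L - p.1))⁻¹) (le, Ne, fpe) :=
      DifferentiableAt.inv (by fun_prop) hD'
    have hC : DifferentiableAt ℝ
        (fun p : ℝ × ℝ × ℝ => (ρ0 * Seff * (1 - p.2.2))⁻¹) (le, Ne, fpe) :=
      DifferentiableAt.inv (by fun_prop) hden
    have h1 : DifferentiableAt ℝ (fun p : ℝ × ℝ × ℝ => Kd / η * p.2.1) (le, Ne, fpe) := by
      fun_prop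
    have h2 : DifferentiableAt ℝ (fun p : ℝ × ℝ × ℝ => η * ρ0 * Veff * (L - p.1))
        (le, Ne, fpe) := by fun_prop
    have h3 : DifferentiableAt ℝ (fun p : ℝ × ℝ × ℝ => ρ0 * Veff * p.2.1 * p.2.2)
        (le, Ne, fpe) := by fun_prop
    exact ((h1.mul (h2.mul hA)).sub h3).mul hC
  refine ⟨hdiff, hFl, hFN, hFfp, ?_, ?_⟩
  · apply div_neg_of_neg_of_pos
    · have : (0:ℝ) < Kd * ρ0 * Veff * B * Ne := by positivity
      linarith
    · positivity
  · apply div_neg_of_neg_of_pos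
    · have : (0:ℝ) < Veff * Ne := by positivity
      linarith
    · positivity
end
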